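/- arXiv:2312.11200 — 3 statements merged into one kernel-verified Lean document; each statement's English description precedes it below -/
import Mathlib

section
/- Let p > 0 and α > 0 be real numbers, let V be a symmetric positive definite n×n real matrix with V ⪯ α·I, and let U be a symmetric n×n real matrix. Then the generalized self-concordance inequality of order ν = 3 holds along the line V + tU: p(p+1)(p+2)·|Tr(V^{−p}·U·V^{−1}·U·V^{−1}·U·V^{−1})| ≤ M · (p(p+1)·Tr(V^{−p}·U·V^{−1}·U·V^{−1}))^{3/2}, where M = (p+2)·(α^{2p}·n)^{1/4} / √(p(p+1)). (The left-hand side is |h'''(0)| and the quantity inside the power on the right is h''(0) for h(t) = Tr((V+tU)^{−p}).) -/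
open Matrix

/-- Largest eigenvalue of a (Hermitian) real matrix. -/
noncomputable def eigMax {n : ℕ} (M : Matrix (Fin n) (Fin n) ℝ) : ℝ :=
  if h : M.IsHermitian then ⨆ i, h.eigenvalues i else 0

/-- Smallest eigenvalue of a (Hermitian) real matrix. -/
noncomputable def eigMin {n : ℕ} (M : Matrix (Fin n) (Fin n) ℝ) : ℝ :=
  if h : M.IsHermitian then ⨅ i, h.eigenvalues i else 0

/-- Spectral norm (largest singular value) of a real matrix. -/
noncomputable def specNorm {m n : ℕ} (A : Matrix (Fin m) (Fin n) ℝ) : ℝ :=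
  Real.sqrt (eigMax (Aᵀ * A))

/-- Real power of a symmetric matrix, via the spectral decomposition:
`M ^ r` has the same eigenvectors as `M` and eigenvalues `λᵢ ^ r`. -/
noncomputable def mpow {n : ℕ} (M : Matrix (Fin n) (Fin n) ℝ) (r : ℝ) :
    Matrix (Fin n) (Fin n) ℝ :=
  if h : M.IsHermitian then
    (h.eigenvectorUnitary : Matrix (Fin n) (Fin n) ℝ) *
      Matrix.diagonal (fun i => h.eigenvalues i ^ r) *
      (star h.eigenvectorUnitary : Matrix (Fin n) (Fin n) ℝ)
  else 0

/-- Frobenius norm of a real matrix. -/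
noncomputable def frobNorm {m n : ℕ} (M : Matrix (Fin m) (Fin n) ℝ) : ℝ :=
  Real.sqrt ((Mᵀ * M).trace)


namespace GSCaux
variable {n : ℕ} {V : Matrix (Fin n) (Fin n) ℝ} (h : V.IsHermitian)

noncomputable def cj (d : Fin n → ℝ) : Matrix (Fin n) (Fin n) ℝ :=
  (h.eigenvectorUnitary : Matrix (Fin n) (Fin n) ℝ) * Matrix.diagonal d *
    (star h.eigenvectorUnitary : Matrix (Fin n) (Fin n) ℝ)

lemma star_mul_self_eigen :
    (star h.eigenvectorUnitary : Matrix (Fin n) (Fin n) ℝ) *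
      (h.eigenvectorUnitary : Matrix (Fin n) (Fin n) ℝ) = 1 :=
  Matrix.mem_unitaryGroup_iff'.mp h.eigenvectorUnitary.2

lemma mul_star_self_eigen :
    (h.eigenvectorUnitary : Matrix (Fin n) (Fin n) ℝ) *
      (star h.eigenvectorUnitary : Matrix (Fin n) (Fin n) ℝ) = 1 :=
  Matrix.mem_unitaryGroup_iff.mp h.eigenvectorUnitary.2

lemma cj_mul (d e : Fin n → ℝ) : cj h d * cj h e = cj h (d * e) := by
  unfold cj
  rw [show ∀ A B C D E : Matrix (Fin n) (Fin n) ℝ,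
      (A * B * C) * (A * D * E) = A * (B * ((C * A) * (D * E))) from
      fun A B C D E => by simp only [Matrix.mul_assoc],
    star_mul_self_eigen h, Matrix.one_mul, ← Matrix.mul_assoc (Matrix.diagonal d),
    Matrix.diagonal_mul_diagonal, ← Matrix.mul_assoc]
  rfl

lemma cj_one : cj h 1 = 1 := by
  unfold cj
  rw [show (1 : Fin n → ℝ) = fun _ => (1:ℝ) from rfl, Matrix.diagonal_one, Matrix.mul_one,
    mul_star_self_eigen h]

lemma cj_herm (d : Fin n → ℝ) : (cj h d).IsHermitian := by
  unfold cj Matrix.IsHermitian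
  simp only [Matrix.conjTranspose_mul, Matrix.diagonal_conjTranspose, Matrix.star_eq_conjTranspose]
  simp [Matrix.mul_assoc, star_trivial]

lemma cj_psd {d : Fin n → ℝ} (hd : ∀ i, 0 ≤ d i) : (cj h d).PosSemidef := by
  have := (Matrix.PosSemidef.diagonal (R := ℝ) (d := d) hd).mul_mul_conjTranspose_same
    (h.eigenvectorUnitary : Matrix (Fin n) (Fin n) ℝ)
  simpa [cj, Matrix.star_eq_conjTranspose] using this

lemma psd_of_cj {d : Fin n → ℝ} (hd : (cj h d).PosSemidef) : ∀ i, 0 ≤ d i := by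
  have key : Matrix.diagonal d =
      (star h.eigenvectorUnitary : Matrix (Fin n) (Fin n) ℝ) * cj h d *
        (h.eigenvectorUnitary : Matrix (Fin n) (Fin n) ℝ) := by
    unfold cj
    have e1 : (star h.eigenvectorUnitary : Matrix (Fin n) (Fin n) ℝ) *
        ((h.eigenvectorUnitary : Matrix (Fin n) (Fin n) ℝ) * Matrix.diagonal d *
          (star h.eigenvectorUnitary : Matrix (Fin n) (Fin n) ℝ)) *
        (h.eigenvectorUnitary : Matrix (Fin n) (Fin n) ℝ) =
        ((star h.eigenvectorUnitary : Matrix (Fin n) (Fin n) ℝ) *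
          (h.eigenvectorUnitary : Matrix (Fin n) (Fin n) ℝ)) * Matrix.diagonal d *
        ((star h.eigenvectorUnitary : Matrix (Fin n) (Fin n) ℝ) *
          (h.eigenvectorUnitary : Matrix (Fin n) (Fin n) ℝ)) := by
      simp only [Matrix.mul_assoc]
    rw [e1, star_mul_self_eigen h, Matrix.one_mul, Matrix.mul_one]
  have : (Matrix.diagonal d).PosSemidef := by
    rw [key]
    have := hd.conjTranspose_mul_mul_same (h.eigenvectorUnitary : Matrix (Fin n) (Fin n) ℝ)
    simpa [Matrix.star_eq_conjTranspose] using this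
  exact Matrix.posSemidef_diagonal_iff.mp this

lemma trace_cj (d : Fin n → ℝ) : (cj h d).trace = ∑ i, d i := by
  unfold cj
  rw [Matrix.trace_mul_cycle, star_mul_self_eigen h, Matrix.one_mul, Matrix.trace_diagonal]

lemma spectral : V = cj h h.eigenvalues := by
  have := h.spectral_theorem
  simpa [cj] using this

lemma cj_const (c : ℝ) : cj h (fun _ => c) = c • (1 : Matrix (Fin n) (Fin n) ℝ) := by
  have : Matrix.diagonal (fun _ : Fin n => c) = c • (1 : Matrix (Fin n) (Fin n) ℝ) := by
    ext i j
    by_cases hij : i = j <;> simp [Matrix.diagonal, Matrix.one_apply, hij]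
  unfold cj
  rw [this]
  rw [Matrix.mul_smul, Matrix.smul_mul, Matrix.mul_one, mul_star_self_eigen h]

lemma cj_sub (d e : Fin n → ℝ) : cj h (d - e) = cj h d - cj h e := by
  unfold cj
  rw [show d - e = fun i => d i - e i from rfl, ← Matrix.diagonal_sub, Matrix.mul_sub,
    Matrix.sub_mul]

lemma cj_add (d e : Fin n → ℝ) : cj h (d + e) = cj h d + cj h e := by
  unfold cj
  rw [show d + e = fun i => d i + e i from rfl, ← Matrix.diagonal_add, Matrix.mul_add,
    Matrix.add_mul]

end GSCaux

namespace GSCaux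
open Matrix
variable {n : ℕ}

lemma psd_trace_nonneg {M : Matrix (Fin n) (Fin n) ℝ} (hM : M.PosSemidef) : 0 ≤ M.trace := by
  rw [Matrix.trace]
  refine Finset.sum_nonneg fun i _ => ?_
  have := hM.2 (Finsupp.single i 1)
  simpa [Finsupp.sum_single_index, dotProduct, Matrix.mulVec, Pi.single_apply, Finset.sum_ite_eq,
    Matrix.diag] using this

lemma trace_mul_psd_nonneg {M A : Matrix (Fin n) (Fin n) ℝ} (hM : M.PosSemidef) :
    0 ≤ (M * (A * Aᴴ)).trace := by
  rw [← Matrix.mul_assoc, Matrix.trace_mul_comm]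
  have := psd_trace_nonneg (hM.conjTranspose_mul_mul_same A)
  rwa [show Aᴴ * M * A = Aᴴ * (M * A) from by rw [Matrix.mul_assoc]] at this

/-- trace of `A*A` equals sum of squared eigenvalues for Hermitian `A` -/
lemma trace_sq_eq {A : Matrix (Fin n) (Fin n) ℝ} (hA : A.IsHermitian) :
    (A * A).trace = ∑ i, hA.eigenvalues i ^ 2 := by
  conv_lhs => rw [spectral hA, cj_mul, trace_cj]
  refine Finset.sum_congr rfl fun i _ => ?_
  simp [sq]

lemma frob_psd {A : Matrix (Fin n) (Fin n) ℝ} (hA : A.IsHermitian) :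
    ((Real.sqrt ((A * A).trace)) • (1 : Matrix (Fin n) (Fin n) ℝ) - A).PosSemidef ∧
      ((Real.sqrt ((A * A).trace)) • (1 : Matrix (Fin n) (Fin n) ℝ) + A).PosSemidef := by
  set c := Real.sqrt ((A * A).trace) with hc
  have habs : ∀ i, |hA.eigenvalues i| ≤ c := by
    intro i
    rw [hc, trace_sq_eq hA, ← Real.sqrt_sq_eq_abs]
    exact Real.sqrt_le_sqrt (Finset.single_le_sum (f := fun j => hA.eigenvalues j ^ 2)
      (fun j _ => sq_nonneg _) (Finset.mem_univ i))
  constructor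
  · have : c • (1 : Matrix (Fin n) (Fin n) ℝ) - A = cj hA (fun i => c - hA.eigenvalues i) := by
      rw [show (fun i => c - hA.eigenvalues i) = (fun _ => c) - hA.eigenvalues from rfl,
        cj_sub, cj_const, ← spectral hA]
    rw [this]
    exact cj_psd hA fun i => sub_nonneg.mpr ((le_abs_self _).trans (habs i))
  · have : c • (1 : Matrix (Fin n) (Fin n) ℝ) + A = cj hA (fun i => c + hA.eigenvalues i) := by
      rw [show (fun i => c + hA.eigenvalues i) = (fun _ => c) + hA.eigenvalues from rfl,
        cj_add, cj_const, ← spectral hA]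
    rw [this]
    refine cj_psd hA fun i => ?_
    have := (abs_le.mp (habs i)).1
    linarith

/-- the key inequality `|Tr(X A Xᴴ)| ≤ ‖A‖_F · Tr(X Xᴴ)` -/
lemma trace_conj_abs_le {A X : Matrix (Fin n) (Fin n) ℝ} (hA : A.IsHermitian) :
    |(X * A * Xᴴ).trace| ≤ Real.sqrt ((A * A).trace) * (X * Xᴴ).trace := by
  set c := Real.sqrt ((A * A).trace) with hc
  obtain ⟨h1, h2⟩ := frob_psd hA
  have e1 : ∀ B : Matrix (Fin n) (Fin n) ℝ,
      X * (c • (1 : Matrix (Fin n) (Fin n) ℝ) - B) * Xᴴ =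
        c • (X * Xᴴ) - X * B * Xᴴ := by
    intro B
    rw [Matrix.mul_sub, Matrix.sub_mul, mul_smul_comm, Matrix.mul_one,
      smul_mul_assoc]
  have e2 : ∀ B : Matrix (Fin n) (Fin n) ℝ,
      X * (c • (1 : Matrix (Fin n) (Fin n) ℝ) + B) * Xᴴ =
        c • (X * Xᴴ) + X * B * Xᴴ := by
    intro B
    rw [Matrix.mul_add, Matrix.add_mul, mul_smul_comm, Matrix.mul_one,
      smul_mul_assoc]
  have t1 : 0 ≤ c * (X * Xᴴ).trace - (X * A * Xᴴ).trace := by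
    have := psd_trace_nonneg (h1.mul_mul_conjTranspose_same X)
    rwa [e1, Matrix.trace_sub, Matrix.trace_smul, smul_eq_mul] at this
  have t2 : 0 ≤ c * (X * Xᴴ).trace + (X * A * Xᴴ).trace := by
    have := psd_trace_nonneg (h2.mul_mul_conjTranspose_same X)
    rwa [e2, Matrix.trace_add, Matrix.trace_smul, smul_eq_mul] at this
  rw [abs_le]
  constructor <;> linarith

end GSCaux

namespace GSCaux
open Matrix
variable {n : ℕ}

lemma mpow_eq {V : Matrix (Fin n) (Fin n) ℝ} (hV : V.PosDef) (r : ℝ) :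
    mpow V r = cj hV.1 (fun i => hV.1.eigenvalues i ^ r) := by
  rw [mpow, dif_pos hV.1]
  rfl

lemma cjpow_mul {V : Matrix (Fin n) (Fin n) ℝ} (hV : V.PosDef) (r s : ℝ) :
    cj hV.1 (fun i => hV.1.eigenvalues i ^ r) * cj hV.1 (fun i => hV.1.eigenvalues i ^ s) =
      cj hV.1 (fun i => hV.1.eigenvalues i ^ (r + s)) := by
  have he : ((fun i => hV.1.eigenvalues i ^ r) * fun i => hV.1.eigenvalues i ^ s) =
      (fun i => hV.1.eigenvalues i ^ (r + s)) :=
    funext fun i => (Real.rpow_add (hV.eigenvalues_pos i) r s).symm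
  rw [cj_mul, he]

theorem main {n : ℕ} (hn : 0 < n) (p α : ℝ) (hp : 0 < p) (hα : 0 < α)
    (U S P : Matrix (Fin n) (Fin n) ℝ)
    (hS : S.IsHermitian) (hP : P.IsHermitian) (hU : U.IsHermitian)
    (hSP : S * P = P * S)
    (hpsd : ((P * P) - (α ^ (-p)) • (1 : Matrix (Fin n) (Fin n) ℝ)).PosSemidef) :
    p * (p + 1) * (p + 2) *
        |((P * P) * U * (S * S) * U * (S * S) * U * (S * S)).trace| ≤
      (p + 2) * (α ^ (2 * p) * (n : ℝ)) ^ ((1 : ℝ) / 4) / Real.sqrt (p * (p + 1)) *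
        (p * (p + 1) * ((P * P) * U * (S * S) * U * (S * S)).trace) ^ ((3 : ℝ) / 2) := by
  have hcomm : ∀ Z : Matrix (Fin n) (Fin n) ℝ, S * (P * Z) = P * (S * Z) := by
    intro Z
    rw [← Matrix.mul_assoc, hSP, Matrix.mul_assoc]
  set A : Matrix (Fin n) (Fin n) ℝ := S * U * S with hAdef
  have hA : A.IsHermitian := by
    rw [hAdef, Matrix.IsHermitian]
    simp only [Matrix.conjTranspose_mul, hS.eq, hU.eq, Matrix.mul_assoc]
  set X : Matrix (Fin n) (Fin n) ℝ := P * A with hXdef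
  have hXH : Xᴴ = A * P := by
    rw [hXdef, Matrix.conjTranspose_mul, hA.eq, hP.eq]
  -- trace identities
  have hT3 : ((P * P) * U * (S * S) * U * (S * S) * U * (S * S)).trace =
      (X * A * Xᴴ).trace := by
    rw [hXH]
    rw [show P * P * U * (S * S) * U * (S * S) * U * (S * S) =
        (P * P * U * (S * S) * U * (S * S) * U * S) * S from by
          simp only [Matrix.mul_assoc],
      Matrix.trace_mul_comm _ S,
      show X * A * (A * P) = (X * A * A) * P from by simp only [Matrix.mul_assoc],
      Matrix.trace_mul_comm _ P]
    congr 1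
    rw [hXdef, hAdef]
    simp only [Matrix.mul_assoc]
    rw [hcomm, hcomm]
  have hT2 : ((P * P) * U * (S * S) * U * (S * S)).trace = (X * Xᴴ).trace := by
    rw [hXH]
    rw [show P * P * U * (S * S) * U * (S * S) =
        (P * P * U * (S * S) * U * S) * S from by simp only [Matrix.mul_assoc],
      Matrix.trace_mul_comm _ S,
      show X * (A * P) = (X * A) * P from by simp only [Matrix.mul_assoc],
      Matrix.trace_mul_comm _ P]
    congr 1
    rw [hXdef, hAdef]
    simp only [Matrix.mul_assoc]
    rw [hcomm, hcomm]
  rw [hT3, hT2]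
  set T2 : ℝ := (X * Xᴴ).trace with hT2def
  set c : ℝ := Real.sqrt ((A * A).trace) with hcdef
  have hT2nn : 0 ≤ T2 := psd_trace_nonneg (Matrix.posSemidef_self_mul_conjTranspose X)
  have habs : |(X * A * Xᴴ).trace| ≤ c * T2 := trace_conj_abs_le hA (X := X)
  -- trace (X Xᴴ) = trace (P P (A Aᴴ))
  have hXXA : ((P * P) * (A * Aᴴ)).trace = T2 := by
    rw [hT2def, hXH, hA.eq,
      show X * (A * P) = (X * A) * P from by simp only [Matrix.mul_assoc],
      Matrix.trace_mul_comm _ P]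
    congr 1
    rw [hXdef]
    simp only [Matrix.mul_assoc]
  have hAA : (A * A).trace ≤ α ^ p * T2 := by
    have h0 : 0 ≤ (((P * P) - (α ^ (-p)) • 1) * (A * Aᴴ)).trace :=
      trace_mul_psd_nonneg hpsd
    rw [Matrix.sub_mul, Matrix.trace_sub, smul_mul_assoc, Matrix.one_mul, Matrix.trace_smul,
      smul_eq_mul, hXXA, hA.eq] at h0
    have hstep : α ^ (-p) * (A * A).trace ≤ T2 := by linarith
    have hαpp : α ^ p * α ^ (-p) = 1 := by
      rw [← Real.rpow_add hα, add_neg_cancel, Real.rpow_zero]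
    calc (A * A).trace = α ^ p * (α ^ (-p) * (A * A).trace) := by
          rw [show α ^ p * (α ^ (-p) * (A * A).trace) = α ^ p * α ^ (-p) * (A * A).trace from
            (mul_assoc _ _ _).symm, hαpp, one_mul]
      _ ≤ α ^ p * T2 := mul_le_mul_of_nonneg_left hstep (Real.rpow_nonneg hα.le p)
  -- numeric part
  set q : ℝ := p * (p + 1) with hqdef
  have hq : 0 < q := by rw [hqdef]; nlinarith
  set K : ℝ := (α ^ (2 * p) * (n : ℝ)) ^ ((1 : ℝ) / 4) with hKdef
  have hx : (0 : ℝ) < α ^ (2 * p) * (n : ℝ) :=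
    mul_pos (Real.rpow_pos_of_pos hα _) (by exact_mod_cast hn)
  have hK : 0 ≤ K := Real.rpow_nonneg hx.le _
  have hKK : K * K = α ^ p * Real.sqrt n := by
    rw [hKdef, ← Real.rpow_add hx]
    norm_num
    rw [← Real.sqrt_eq_rpow, Real.sqrt_mul (Real.rpow_pos_of_pos hα _).le,
      show (2 : ℝ) * p = p + p from by ring, Real.rpow_add hα,
      Real.sqrt_mul_self (Real.rpow_nonneg hα.le p)]
  have hc : 0 ≤ c := Real.sqrt_nonneg _
  have hsqn : (1 : ℝ) ≤ Real.sqrt n := by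
    rw [show (1:ℝ) = Real.sqrt 1 from (Real.sqrt_one).symm]
    exact Real.sqrt_le_sqrt (by exact_mod_cast hn)
  have hcK : c ≤ K * Real.sqrt T2 := by
    have h1 : (A * A).trace ≤ (K * Real.sqrt T2) ^ 2 := by
      have e : (K * Real.sqrt T2) ^ 2 = (K * K) * T2 := by
        rw [mul_pow, Real.sq_sqrt hT2nn]; ring
      rw [e, hKK]
      have haux := mul_le_mul_of_nonneg_left hsqn
        (mul_nonneg (Real.rpow_nonneg hα.le p) hT2nn)
      nlinarith [hAA, haux]
    calc c ≤ Real.sqrt ((K * Real.sqrt T2) ^ 2) := Real.sqrt_le_sqrt h1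
      _ = K * Real.sqrt T2 := Real.sqrt_sq (by positivity)
  have hf : ∀ x : ℝ, 0 ≤ x → x ^ ((3 : ℝ) / 2) = x * Real.sqrt x := by
    intro x hx
    rcases hx.eq_or_lt with h | h
    · rw [← h, Real.zero_rpow (by norm_num), Real.sqrt_zero, mul_zero]
    · rw [show (3 : ℝ) / 2 = 1 + 1 / 2 from by norm_num, Real.rpow_add h, Real.rpow_one,
        ← Real.sqrt_eq_rpow]
  have hq32 : (q * T2) ^ ((3 : ℝ) / 2) = (q * Real.sqrt q) * (T2 * Real.sqrt T2) := by
    rw [Real.mul_rpow hq.le hT2nn, hf q hq.le, hf T2 hT2nn]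
  rw [hq32]
  have hsq : 0 < Real.sqrt q := Real.sqrt_pos.mpr hq
  have hRHS : (p + 2) * K / Real.sqrt q * ((q * Real.sqrt q) * (T2 * Real.sqrt T2)) =
      ((p + 2) * q) * (K * Real.sqrt T2 * T2) := by
    field_simp
  rw [hRHS]
  have key : |(X * A * Xᴴ).trace| ≤ K * Real.sqrt T2 * T2 :=
    habs.trans (mul_le_mul_of_nonneg_right hcK hT2nn)
  calc q * (p + 2) * |(X * A * Xᴴ).trace| = ((p + 2) * q) * |(X * A * Xᴴ).trace| := by ring
    _ ≤ ((p + 2) * q) * (K * Real.sqrt T2 * T2) := by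
        apply mul_le_mul_of_nonneg_left key
        nlinarith

end GSCaux

/-- Generalized self-concordance inequality (order ν = 3) for
`h(t) = Tr((V+tU)^{−p})` at `t = 0`:
`p(p+1)(p+2)·|Tr(V^{−p} U V^{−1} U V^{−1} U V^{−1})| ≤ M·(p(p+1)·Tr(V^{−p} U V^{−1} U V^{−1}))^{3/2}`
with `M = (p+2)·(α^{2p} n)^{1/4} / √(p(p+1))`, whenever `0 ≺ V ⪯ α·I`. -/
theorem trace_power_gsc (n : ℕ) (p α : ℝ) (hp : 0 < p) (hα : 0 < α)
    (V U : Matrix (Fin n) (Fin n) ℝ) (hV : V.PosDef)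
    (hVα : (α • (1 : Matrix (Fin n) (Fin n) ℝ) - V).PosSemidef)
    (hU : U.IsHermitian) :
    p * (p + 1) * (p + 2) *
        |(mpow V (-p) * U * mpow V (-1) * U * mpow V (-1) * U * mpow V (-1)).trace| ≤
      (p + 2) * (α ^ (2 * p) * (n : ℝ)) ^ ((1 : ℝ) / 4) / Real.sqrt (p * (p + 1)) *
        (p * (p + 1) * (mpow V (-p) * U * mpow V (-1) * U * mpow V (-1)).trace) ^
          ((3 : ℝ) / 2) := by
  classical
  rcases Nat.eq_zero_or_pos n with hn | hn
  · subst hn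
    have htr : ∀ M : Matrix (Fin 0) (Fin 0) ℝ, M.trace = 0 := fun M => by
      simp [Matrix.trace]
    rw [htr, htr, abs_zero, mul_zero, mul_zero, Real.zero_rpow (by norm_num)]
    simp
  · have hlam : ∀ i, 0 < hV.1.eigenvalues i := hV.eigenvalues_pos
    have hle : ∀ i, hV.1.eigenvalues i ≤ α := by
      have hd : α • (1 : Matrix (Fin n) (Fin n) ℝ) - V =
          GSCaux.cj hV.1 ((fun _ => α) - hV.1.eigenvalues) := by
        rw [GSCaux.cj_sub, GSCaux.cj_const, ← GSCaux.spectral hV.1]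
      rw [hd] at hVα
      have := GSCaux.psd_of_cj hV.1 hVα
      intro i
      have hi := this i
      simp only [Pi.sub_apply] at hi
      linarith
    set S : Matrix (Fin n) (Fin n) ℝ :=
      GSCaux.cj hV.1 (fun i => hV.1.eigenvalues i ^ (-(1/2) : ℝ)) with hSdef
    set P : Matrix (Fin n) (Fin n) ℝ :=
      GSCaux.cj hV.1 (fun i => hV.1.eigenvalues i ^ (-(p/2) : ℝ)) with hPdef
    have hSS : S * S = mpow V (-1) := by
      rw [hSdef, GSCaux.cjpow_mul hV, GSCaux.mpow_eq hV]
      norm_num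
    have hPP : P * P = mpow V (-p) := by
      rw [hPdef, GSCaux.cjpow_mul hV, GSCaux.mpow_eq hV]
      ring_nf
    have hSP : S * P = P * S := by
      rw [hSdef, hPdef, GSCaux.cjpow_mul hV, GSCaux.cjpow_mul hV, add_comm]
    have hS : S.IsHermitian := GSCaux.cj_herm hV.1 _
    have hP : P.IsHermitian := GSCaux.cj_herm hV.1 _
    have hpsd : ((P * P) - (α ^ (-p)) • (1 : Matrix (Fin n) (Fin n) ℝ)).PosSemidef := by
      have e1 : P * P = GSCaux.cj hV.1 (fun i => hV.1.eigenvalues i ^ (-p : ℝ)) := by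
        rw [hPdef, GSCaux.cjpow_mul hV, show -(p/2) + -(p/2) = -p from by ring]
      have e2 : (P * P) - (α ^ (-p)) • (1 : Matrix (Fin n) (Fin n) ℝ) =
          GSCaux.cj hV.1 ((fun i => hV.1.eigenvalues i ^ (-p : ℝ)) - (fun _ => α ^ (-p))) := by
        rw [GSCaux.cj_sub, GSCaux.cj_const, e1]
      rw [e2]
      apply GSCaux.cj_psd
      intro i
      simp only [Pi.sub_apply, sub_nonneg]
      rw [Real.rpow_neg hα.le, Real.rpow_neg (hlam i).le]
      exact inv_anti₀ (Real.rpow_pos_of_pos (hlam i) p)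
        (Real.rpow_le_rpow (hlam i).le (hle i) hp.le)
    have := GSCaux.main hn p α hp hα U S P hS hP hU hSP hpsd
    rw [← hPP, ← hSS]
    exact this
end

section
/- Let A be a real m×n matrix, C a symmetric positive definite n×n real matrix, p > 0 a real number, l, u ∈ ℝ^m with 0 ≤ l ≤ u, and N > 0, and assume the polytope 𝒫 = {x ∈ ℝ^m : l ≤ x ≤ u, Σᵢ xᵢ = N} is nonempty. Let g_F(x) = Tr((C + Aᵀ·diag(x)·A)^{−p}), let Ω* be the set of minimizers of g_F over 𝒫 and g* its minimum value. Then g_F is (M, 1/2)-sharp on 𝒫 for some M > 0: there exists M > 0 such that for every x ∈ 𝒫, M·(g_F(x) − g*)^{1/2} ≥ inf_{y ∈ Ω*} ‖x − y‖₂. -/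
open Matrix

open RealInnerProductSpace Finset
set_option linter.unusedSectionVars false
set_option maxHeartbeats 1000000
set_option synthInstance.maxHeartbeats 400000

section HoffmanSection
variable {E : Type*} [NormedAddCommGroup E] [InnerProductSpace ℝ E] [FiniteDimensional ℝ E]
variable {T : Type*} [Fintype T] [DecidableEq T]

/-- The cone of nonnegative combinations of `β t`, `t ∈ s`. -/
def coneC (β : T → E) (s : Finset T) : Set E :=
  {v | ∃ lam : T → ℝ, (∀ t ∈ s, 0 ≤ lam t) ∧ v = ∑ t ∈ s, lam t • β t}

theorem conic_caratheodory (β : T → E) :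
    ∀ (s : Finset T) (lam : T → ℝ), (∀ t ∈ s, 0 ≤ lam t) →
    ∃ (J : Finset T) (mu : T → ℝ), J ⊆ s ∧ LinearIndependent ℝ (fun j : J => β j) ∧
      (∀ t ∈ J, 0 ≤ mu t) ∧ ∑ t ∈ J, mu t • β t = ∑ t ∈ s, lam t • β t := by
  intro s
  induction s using Finset.strongInduction with
  | _ s ih =>
    intro lam hlam
    by_cases hind : LinearIndependent ℝ (fun j : s => β j)
    · exact ⟨s, lam, Finset.Subset.refl s, hind, hlam, rfl⟩
    · obtain ⟨g, hg, i0, hgi0⟩ := Fintype.not_linearIndependent_iff.mp hind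
      -- extend g to T by zero
      set d : T → ℝ := fun t => if h : t ∈ s then g ⟨t, h⟩ else 0 with hd
      have hsum_d : ∑ t ∈ s, d t • β t = 0 := by
        rw [← hg, ← Finset.sum_attach s (fun t => d t • β t)]
        refine Finset.sum_congr rfl fun t _ => ?_
        simp [hd, t.2]
      have hdne : ∃ t ∈ s, d t ≠ 0 := ⟨i0, i0.2, by simpa [hd, i0.2] using hgi0⟩
      -- WLOG some positive coefficient: replace d by -d if needed
      have key : ∀ d : T → ℝ, (∑ t ∈ s, d t • β t = 0) → (∃ t ∈ s, 0 < d t) →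
          ∃ (J : Finset T) (mu : T → ℝ), J ⊆ s ∧ LinearIndependent ℝ (fun j : J => β j) ∧
            (∀ t ∈ J, 0 ≤ mu t) ∧ ∑ t ∈ J, mu t • β t = ∑ t ∈ s, lam t • β t := by
        intro d hdsum ⟨tp, htp, htp'⟩
        set Pos := s.filter (fun t => 0 < d t) with hPos
        have hPosne : Pos.Nonempty := ⟨tp, Finset.mem_filter.mpr ⟨htp, htp'⟩⟩
        obtain ⟨t0, ht0, ht0min⟩ := Finset.exists_min_image Pos (fun t => lam t / d t) hPosne
        have ht0s : t0 ∈ s := (Finset.mem_filter.mp ht0).1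
        have ht0pos : 0 < d t0 := (Finset.mem_filter.mp ht0).2
        set r := lam t0 / d t0 with hr
        have hrnn : 0 ≤ r := div_nonneg (hlam t0 ht0s) ht0pos.le
        set lam' : T → ℝ := fun t => lam t - r * d t with hlam'
        have hlam'nn : ∀ t ∈ s.erase t0, 0 ≤ lam' t := by
          intro t ht
          have hts := Finset.mem_of_mem_erase ht
          rcases le_or_gt (d t) 0 with hdt | hdt
          · have : r * d t ≤ 0 := mul_nonpos_of_nonneg_of_nonpos hrnn hdt
            simp only [hlam']; linarith [hlam t hts]
          · have htPos : t ∈ Pos := Finset.mem_filter.mpr ⟨hts, hdt⟩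
            have := ht0min t htPos
            have : r ≤ lam t / d t := this
            simp only [hlam']
            have hrd : r * d t ≤ lam t := by
              have := (le_div_iff₀ hdt).mp this
              linarith
            linarith
        have hsum' : ∑ t ∈ s.erase t0, lam' t • β t = ∑ t ∈ s, lam t • β t := by
          have h1 : ∑ t ∈ s, lam' t • β t = ∑ t ∈ s, lam t • β t := by
            have : ∑ t ∈ s, lam' t • β t
                = ∑ t ∈ s, lam t • β t - r • ∑ t ∈ s, d t • β t := by
              rw [Finset.smul_sum, ← Finset.sum_sub_distrib]
              refine Finset.sum_congr rfl fun t _ => ?_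
              simp [hlam', sub_smul, smul_smul]
            rw [this, hdsum, smul_zero, sub_zero]
          have h2 : lam' t0 = 0 := by simp [hlam', hr, ht0pos.ne']
          rw [← h1, ← Finset.add_sum_erase s _ ht0s, h2, zero_smul, zero_add]
        obtain ⟨J, mu, hJsub, hJind, hmunn, hmusum⟩ :=
          ih (s.erase t0) (Finset.erase_ssubset ht0s) lam' hlam'nn
        exact ⟨J, mu, hJsub.trans (Finset.erase_subset _ _), hJind, hmunn,
          hmusum.trans hsum'⟩
      rcases hdne with ⟨t1, ht1, ht1'⟩
      rcases ht1'.lt_or_gt with hneg | hpos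
      · refine key (fun t => -d t) ?_ ⟨t1, ht1, by simpa using neg_pos.mpr hneg⟩
        simp only [neg_smul, Finset.sum_neg_distrib, hsum_d, neg_zero]
      · exact key d hsum_d ⟨t1, ht1, hpos⟩
theorem coneC_convex (β : T → E) (s : Finset T) : Convex ℝ (coneC β s) := by
  rintro v ⟨lv, hlv, rfl⟩ w ⟨lw, hlw, rfl⟩ a b ha hb _
  refine ⟨fun t => a * lv t + b * lw t,
    fun t ht => add_nonneg (mul_nonneg ha (hlv t ht)) (mul_nonneg hb (hlw t ht)), ?_⟩
  rw [Finset.smul_sum, Finset.smul_sum, ← Finset.sum_add_distrib]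
  exact Finset.sum_congr rfl fun t _ => by rw [add_smul, smul_smul, smul_smul]

theorem coneC_smul_mem (β : T → E) (s : Finset T) {v : E} (hv : v ∈ coneC β s) {r : ℝ}
    (hr : 0 ≤ r) : r • v ∈ coneC β s := by
  obtain ⟨lam, hlam, rfl⟩ := hv
  refine ⟨fun t => r * lam t, fun t ht => mul_nonneg hr (hlam t ht), ?_⟩
  rw [Finset.smul_sum]
  exact Finset.sum_congr rfl fun t _ => by rw [smul_smul]

theorem zero_mem_coneC (β : T → E) (s : Finset T) : (0 : E) ∈ coneC β s :=
  ⟨fun _ => 0, fun _ _ => le_refl 0, by simp⟩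

/-- The image of the nonnegative orthant under the combination map for the subfamily `J`. -/
def coneJ (β : T → E) (J : Finset T) : Set E :=
  (fun w : ({x // x ∈ J} → ℝ) => ∑ j : {x // x ∈ J}, w j • β j.1) ''
    {w | ∀ j, 0 ≤ w j}

/-- the combination map as a linear map -/
def combLM (β : T → E) (J : Finset T) : ({x // x ∈ J} → ℝ) →ₗ[ℝ] E where
  toFun := fun w => ∑ j : {x // x ∈ J}, w j • β j.1
  map_add' := fun w₁ w₂ => by
    rw [← Finset.sum_add_distrib]
    exact Finset.sum_congr rfl fun j _ => by rw [Pi.add_apply, add_smul]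
  map_smul' := fun r w => by
    rw [RingHom.id_apply, Finset.smul_sum]
    exact Finset.sum_congr rfl fun j _ => by rw [Pi.smul_apply, smul_smul, smul_eq_mul]

theorem coneJ_isClosed (β : T → E) (J : Finset T)
    (hind : LinearIndependent ℝ (fun j : {x // x ∈ J} => β j.1)) :
    IsClosed (coneJ β J) := by
  have hinj : Function.Injective (combLM β J) := by
    rw [← LinearMap.ker_eq_bot]
    apply LinearMap.ker_eq_bot'.mpr
    intro w hw
    have := linearIndependent_iff'.mp hind Finset.univ (fun j => w j) ?_
    · funext j; exact this j (Finset.mem_univ j)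
    · simpa [combLM] using hw
  have hemb := (combLM β J).isClosedEmbedding_of_injective
    (LinearMap.ker_eq_bot.mpr hinj)
  have horth : IsClosed {w : {x // x ∈ J} → ℝ | ∀ j, 0 ≤ w j} := by
    have : {w : {x // x ∈ J} → ℝ | ∀ j, 0 ≤ w j} = ⋂ j, {w | 0 ≤ w j} := by
      ext w; simp [Set.mem_iInter]
    rw [this]
    exact isClosed_iInter fun j => isClosed_le continuous_const (continuous_apply j)
  have : coneJ β J = (combLM β J) '' {w | ∀ j, 0 ≤ w j} := rfl
  rw [this]
  exact hemb.isClosedMap _ horth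

theorem coneC_isClosed (β : T → E) (s : Finset T) : IsClosed (coneC β s) := by
  classical
  have hdecomp : coneC β s = ⋃ J ∈ s.powerset.filter
      (fun J => LinearIndependent ℝ (fun j : {x // x ∈ J} => β j.1)), coneJ β J := by
    ext v
    constructor
    · rintro ⟨lam, hlam, rfl⟩
      obtain ⟨J, mu, hJs, hJind, hmunn, hmusum⟩ := conic_caratheodory β s lam hlam
      refine Set.mem_biUnion (Finset.mem_filter.mpr ⟨Finset.mem_powerset.mpr hJs, hJind⟩) ?_
      have h1 : ∑ t ∈ J, mu t • β t = ∑ j : {x // x ∈ J}, mu j.1 • β j.1 :=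
        (Finset.sum_attach J (fun t => mu t • β t)).symm
      refine ⟨fun j => mu j.1, fun j => hmunn j.1 j.2, ?_⟩
      show ∑ j : {x // x ∈ J}, mu j.1 • β j.1 = _
      rw [← h1, hmusum]
    · intro hv
      obtain ⟨J, hJ, w, hwnn, rfl⟩ := Set.mem_iUnion₂.mp hv
      have hJs : J ⊆ s := Finset.mem_powerset.mp (Finset.mem_filter.mp hJ).1
      refine ⟨fun t => if h : t ∈ J then w ⟨t, h⟩ else 0, fun t _ => ?_, ?_⟩
      · by_cases h : t ∈ J
        · simpa [h] using hwnn ⟨t, h⟩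
        · simp [h]
      · have h2 : ∑ t ∈ s, (fun t => if h : t ∈ J then w ⟨t, h⟩ else 0) t • β t
            = ∑ t ∈ J, (fun t => if h : t ∈ J then w ⟨t, h⟩ else 0) t • β t :=
          (Finset.sum_subset hJs (fun t _ ht => by simp [ht])).symm
        refine Eq.trans ?_ h2.symm
        rw [← Finset.sum_attach J
          (fun t => (fun t => if h : t ∈ J then w ⟨t, h⟩ else 0) t • β t)]
        exact Finset.sum_congr rfl fun j _ => by simp [j.2]
  rw [hdecomp]
  refine Set.Finite.isClosed_biUnion (Finset.finite_toSet _) fun J hJ => ?_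
  exact coneJ_isClosed β J (Finset.mem_filter.mp (Finset.mem_coe.mp hJ)).2

/-- **Farkas-type lemma**: an element of the double dual of a finitely generated cone
belongs to the cone. -/
theorem farkas (β : T → E) (s : Finset T) (v : E)
    (h : ∀ d : E, (∀ t ∈ s, ⟪β t, d⟫ ≤ 0) → ⟪v, d⟫ ≤ 0) : v ∈ coneC β s := by
  by_contra hv
  obtain ⟨f, u, hfu, huv⟩ :=
    geometric_hahn_banach_closed_point (coneC_convex β s) (coneC_isClosed β s) hv
  set d : E := (InnerProductSpace.toDual ℝ E).symm f with hdd
  have hdf : ∀ y, ⟪d, y⟫ = f y := fun y => InnerProductSpace.toDual_symm_apply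
  have hu0 : 0 < u := by simpa using hfu 0 (zero_mem_coneC β s)
  have hβ : ∀ t ∈ s, ⟪β t, d⟫ ≤ 0 := by
    intro t ht
    rw [real_inner_comm, hdf]
    by_contra hpos
    push_neg at hpos
    have hmem : ∀ r : ℝ, 0 ≤ r → r • β t ∈ coneC β s := by
      intro r hr
      refine coneC_smul_mem β s ?_ hr
      refine ⟨fun t' => if t' = t then 1 else 0, fun t' _ => by positivity, ?_⟩
      rw [Finset.sum_eq_single_of_mem t ht (fun b _ hb => by simp [hb])]
      simp
    have := hfu _ (hmem ((u + 1)/ f (β t)) (by positivity))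
    rw [_root_.map_smul] at this
    have hne : f (β t) ≠ 0 := ne_of_gt hpos
    rw [smul_eq_mul, div_mul_cancel₀ _ hne] at this
    linarith
  have := h d hβ
  rw [real_inner_comm, hdf] at this
  linarith

theorem multiplier_bound (β : T → E) :
    ∃ κ : ℝ, 1 ≤ κ ∧ ∀ J : Finset T,
      LinearIndependent ℝ (fun j : {x // x ∈ J} => β j.1) →
      ∀ mu : T → ℝ, (∀ t ∈ J, 0 ≤ mu t) →
        ∑ t ∈ J, mu t ≤ κ * ‖∑ t ∈ J, mu t • β t‖ := by
  classical
  have hJbound : ∀ J : Finset T, ∃ κJ : ℝ, 0 ≤ κJ ∧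
      (LinearIndependent ℝ (fun j : {x // x ∈ J} => β j.1) →
        ∀ mu : T → ℝ, (∀ t ∈ J, 0 ≤ mu t) →
          ∑ t ∈ J, mu t ≤ κJ * ‖∑ t ∈ J, mu t • β t‖) := by
    intro J
    by_cases hind : LinearIndependent ℝ (fun j : {x // x ∈ J} => β j.1)
    swap
    · exact ⟨0, le_refl 0, fun h => absurd h hind⟩
    have hinj : Function.Injective (combLM β J) := by
      rw [← LinearMap.ker_eq_bot]
      apply LinearMap.ker_eq_bot'.mpr
      intro w hw
      have := linearIndependent_iff'.mp hind Finset.univ (fun j => w j) ?_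
      · funext j; exact this j (Finset.mem_univ j)
      · simpa [combLM] using hw
    set Φ := combLM β J with hΦ
    set e := LinearEquiv.ofInjective Φ hinj with he
    set g := LinearMap.toContinuousLinearMap (e.symm.toLinearMap) with hg
    set C := ‖g‖ with hC
    refine ⟨(J.card : ℝ) * C + 1, by positivity, fun _ mu hmu => ?_⟩
    set w : {x // x ∈ J} → ℝ := fun j => mu j.1 with hw
    have h1 : ∑ t ∈ J, mu t • β t = Φ w := by
      show _ = ∑ j : {x // x ∈ J}, w j • β j.1
      exact (Finset.sum_attach J (fun t => mu t • β t)).symm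
    have hwnn : ∀ j, 0 ≤ w j := fun j => hmu j.1 j.2
    have h2 : ∑ t ∈ J, mu t = ∑ j : {x // x ∈ J}, w j :=
      (Finset.sum_attach J mu).symm
    have h3 : ∑ j : {x // x ∈ J}, w j ≤ (J.card : ℝ) * ‖w‖ := by
      calc ∑ j : {x // x ∈ J}, w j ≤ ∑ _j : {x // x ∈ J}, ‖w‖ := by
            refine Finset.sum_le_sum fun j _ => ?_
            calc w j ≤ |w j| := le_abs_self _
              _ = ‖w j‖ := (Real.norm_eq_abs _).symm
              _ ≤ ‖w‖ := norm_le_pi_norm w j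
        _ = (J.card : ℝ) * ‖w‖ := by
            rw [Finset.sum_const, nsmul_eq_mul]
            congr 1
            simp [Fintype.card_coe]
  -- ‖w‖ ≤ C * ‖Φ w‖
    have h4 : ‖w‖ ≤ C * ‖Φ w‖ := by
      have hew : e w = ⟨Φ w, LinearMap.mem_range_self Φ w⟩ := by
        apply Subtype.ext
        simp [he]
      have : w = g ⟨Φ w, LinearMap.mem_range_self Φ w⟩ := by
        rw [← hew]
        show w = e.symm (e w)
        rw [LinearEquiv.symm_apply_apply]
      conv_lhs => rw [this]
      calc ‖g ⟨Φ w, LinearMap.mem_range_self Φ w⟩‖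
          ≤ C * ‖(⟨Φ w, LinearMap.mem_range_self Φ w⟩ : LinearMap.range Φ)‖ :=
            g.le_opNorm _
        _ = C * ‖Φ w‖ := by rw [Submodule.norm_coe ⟨Φ w, LinearMap.mem_range_self Φ w⟩]
    have hΦnn : 0 ≤ ‖Φ w‖ := norm_nonneg _
    have hcard : (0:ℝ) ≤ (J.card : ℝ) := Nat.cast_nonneg _
    have hCnn : 0 ≤ C := by rw [hC]; exact norm_nonneg g
    rw [h1, h2]
    calc ∑ j : {x // x ∈ J}, w j ≤ (J.card : ℝ) * ‖w‖ := h3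
      _ ≤ (J.card : ℝ) * (C * ‖Φ w‖) := by
          refine mul_le_mul_of_nonneg_left h4 hcard
      _ ≤ ((J.card : ℝ) * C + 1) * ‖Φ w‖ := by nlinarith
  choose k hk0 hk using hJbound
  refine ⟨1 + ∑ J ∈ (Finset.univ : Finset (Finset T)), k J, ?_, fun J hind mu hmu => ?_⟩
  · have : 0 ≤ ∑ J ∈ (Finset.univ : Finset (Finset T)), k J :=
      Finset.sum_nonneg fun J _ => hk0 J
    linarith
  · have hkJ : k J ≤ 1 + ∑ J' ∈ (Finset.univ : Finset (Finset T)), k J' := by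
      have : k J ≤ ∑ J' ∈ (Finset.univ : Finset (Finset T)), k J' :=
        Finset.single_le_sum (fun J' _ => hk0 J') (Finset.mem_univ J)
      linarith
    calc ∑ t ∈ J, mu t ≤ k J * ‖∑ t ∈ J, mu t • β t‖ := hk J hind mu hmu
      _ ≤ (1 + ∑ J' ∈ (Finset.univ : Finset (Finset T)), k J') * ‖∑ t ∈ J, mu t • β t‖ :=
          mul_le_mul_of_nonneg_right hkJ (norm_nonneg _)

/-- **Hoffman-type error bound** for a polyhedron `Q = {y | ∀ t, ⟪β t, y⟫ ≤ c t}`. -/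
theorem hoffman_bound (β : T → E) (c : T → ℝ) (Q : Set E)
    (hQ : Q = {y : E | ∀ t, ⟪β t, y⟫ ≤ c t}) (hne : Q.Nonempty) :
    ∃ κ : ℝ, 0 < κ ∧ ∀ x : E, Metric.infDist x Q ≤ κ * ∑ t, max (⟪β t, x⟫ - c t) 0 := by
  classical
  obtain ⟨κ, hκ1, hκ⟩ := multiplier_bound β
  refine ⟨κ, lt_of_lt_of_le one_pos hκ1, fun x => ?_⟩
  have hconv : Convex ℝ Q := by
    rw [hQ]
    intro y1 hy1 y2 hy2 a b ha hb hab
    intro t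
    have h1 := hy1 t
    have h2 := hy2 t
    calc ⟪β t, a • y1 + b • y2⟫ = a * ⟪β t, y1⟫ + b * ⟪β t, y2⟫ := by
          rw [inner_add_right, real_inner_smul_right, real_inner_smul_right]
      _ ≤ a * c t + b * c t := by
          exact add_le_add (mul_le_mul_of_nonneg_left h1 ha) (mul_le_mul_of_nonneg_left h2 hb)
      _ = c t := by rw [← add_mul, hab, one_mul]
  have hclosed : IsClosed Q := by
    have : Q = ⋂ t, {y : E | ⟪β t, y⟫ ≤ c t} := by
      rw [hQ]; ext y; simp [Set.mem_iInter]
    rw [this]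
    exact isClosed_iInter fun t =>
      isClosed_le (Continuous.inner continuous_const continuous_id) continuous_const
  obtain ⟨p, hpQ, hpmin⟩ := exists_norm_eq_iInf_of_complete_convex hne
    (hclosed.isComplete) hconv x
  have hvar : ∀ w ∈ Q, ⟪x - p, w - p⟫ ≤ 0 :=
    (norm_eq_iInf_iff_real_inner_le_zero hconv hpQ).mp hpmin
  set v := x - p with hv
  set R := ∑ t, max (⟪β t, x⟫ - c t) 0 with hR
  have hRnn : 0 ≤ R := Finset.sum_nonneg fun t _ => le_max_right _ _
  have hdistv : Metric.infDist x Q ≤ ‖v‖ := by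
    rw [hv, ← dist_eq_norm]
    exact Metric.infDist_le_dist_of_mem hpQ
  have hQp : ∀ t, ⟪β t, p⟫ ≤ c t := by rw [hQ] at hpQ; exact hpQ
  set Aset := Finset.univ.filter (fun t => ⟪β t, p⟫ = c t) with hAset
  -- dual condition for the active cone
  have hdual : ∀ d : E, (∀ t ∈ Aset, ⟪β t, d⟫ ≤ 0) → ⟪v, d⟫ ≤ 0 := by
    intro d hd
    -- find s > 0 with p + s • d ∈ Q
    have hmem : ∃ s : ℝ, 0 < s ∧ p + s • d ∈ Q := by
      set I := Finset.univ.filter (fun t => ⟪β t, p⟫ < c t) with hI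
      set B := (∑ t, |⟪β t, d⟫|) + 1 with hB
      have hBpos : 0 < B := by
        have : 0 ≤ ∑ t, |⟪β t, d⟫| := Finset.sum_nonneg fun t _ => abs_nonneg _
        linarith
      have hBge : ∀ t, |⟪β t, d⟫| ≤ B := by
        intro t
        have : |⟪β t, d⟫| ≤ ∑ t', |⟪β t', d⟫| :=
          Finset.single_le_sum (f := fun t' => |⟪β t', d⟫|)
            (fun t' _ => abs_nonneg _) (Finset.mem_univ t)
        linarith
      have hcases : ∀ t, t ∈ Aset ∨ t ∈ I := by
        intro t
        rcases eq_or_lt_of_le (hQp t) with h | h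
        · exact Or.inl (Finset.mem_filter.mpr ⟨Finset.mem_univ t, h⟩)
        · exact Or.inr (Finset.mem_filter.mpr ⟨Finset.mem_univ t, h⟩)
      rcases I.eq_empty_or_nonempty with hIe | hIne
      · refine ⟨1, one_pos, ?_⟩
        rw [hQ]
        intro t
        have ht : t ∈ Aset := by
          rcases hcases t with h | h
          · exact h
          · rw [hIe] at h; exact absurd h (Finset.notMem_empty t)
        have := hd t ht
        have heq : ⟪β t, p⟫ = c t := (Finset.mem_filter.mp ht).2
        rw [inner_add_right, real_inner_smul_right]
        linarith
      · obtain ⟨tm, htm, htmmin⟩ := Finset.exists_min_image I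
          (fun t => c t - ⟪β t, p⟫) hIne
        set σ := c tm - ⟪β tm, p⟫ with hσ
        have hσpos : 0 < σ := by
          have := (Finset.mem_filter.mp htm).2
          simp only [hσ]; linarith
        refine ⟨σ / B, div_pos hσpos hBpos, ?_⟩
        rw [hQ]
        intro t
        rw [inner_add_right, real_inner_smul_right]
        rcases hcases t with h | h
        · have := hd t h
          have heq : ⟪β t, p⟫ = c t := (Finset.mem_filter.mp h).2
          have : σ / B * ⟪β t, d⟫ ≤ 0 :=
            mul_nonpos_of_nonneg_of_nonpos (le_of_lt (div_pos hσpos hBpos)) this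
          linarith
        · have hσt : σ ≤ c t - ⟪β t, p⟫ := htmmin t h
          have habs : ⟪β t, d⟫ ≤ B := le_trans (le_abs_self _) (hBge t)
          have : σ / B * ⟪β t, d⟫ ≤ σ / B * B :=
            mul_le_mul_of_nonneg_left habs (le_of_lt (div_pos hσpos hBpos))
          rw [div_mul_cancel₀ _ (ne_of_gt hBpos)] at this
          linarith
    obtain ⟨s, hs, hmem'⟩ := hmem
    have := hvar _ hmem'
    rw [add_sub_cancel_left, real_inner_smul_right] at this
    nlinarith [this, hs]
  -- Farkas + Caratheodory: v is a nonneg combination of an independent active subfamily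
  obtain ⟨lam, hlam, hlamsum⟩ := farkas β Aset v hdual
  obtain ⟨J, mu, hJA, hJind, hmunn, hmusum⟩ := conic_caratheodory β Aset lam hlam
  have hvrep : ∑ t ∈ J, mu t • β t = v := by rw [hmusum, ← hlamsum]
  -- each active functional value at x is at most R
  have hres : ∀ t ∈ J, ⟪β t, v⟫ ≤ R := by
    intro t ht
    have htA : t ∈ Aset := hJA ht
    have heq : ⟪β t, p⟫ = c t := (Finset.mem_filter.mp htA).2
    have : ⟪β t, v⟫ = ⟪β t, x⟫ - c t := by
      rw [hv, inner_sub_right, heq]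
    rw [this]
    calc ⟪β t, x⟫ - c t ≤ max (⟪β t, x⟫ - c t) 0 := le_max_left _ _
      _ ≤ R := Finset.single_le_sum (fun t' (_ : t' ∈ Finset.univ) =>
          le_max_right (⟪β t', x⟫ - c t') 0) (Finset.mem_univ t)
  have hnormsq : ‖v‖ ^ 2 ≤ (∑ t ∈ J, mu t) * R := by
    have h1 : ‖v‖ ^ 2 = ⟪v, v⟫ := (real_inner_self_eq_norm_sq v).symm
    have h2' : ⟪(∑ t ∈ J, mu t • β t : E), v⟫ = ∑ t ∈ J, mu t * ⟪β t, v⟫ := by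
      rw [sum_inner]
      exact Finset.sum_congr rfl fun t _ => real_inner_smul_left _ _ _
    have h2 : ⟪v, v⟫ = ∑ t ∈ J, mu t * ⟪β t, v⟫ := by
      nth_rewrite 1 [← hvrep]
      exact h2'
    rw [h1, h2]
    have : ∀ t ∈ J, mu t * ⟪β t, v⟫ ≤ mu t * R := fun t ht =>
      mul_le_mul_of_nonneg_left (hres t ht) (hmunn t ht)
    calc ∑ t ∈ J, mu t * ⟪β t, v⟫ ≤ ∑ t ∈ J, mu t * R := Finset.sum_le_sum this
      _ = (∑ t ∈ J, mu t) * R := by rw [Finset.sum_mul]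
  have hmubound : ∑ t ∈ J, mu t ≤ κ * ‖v‖ := by
    have := hκ J hJind mu hmunn
    rw [hvrep] at this
    exact this
  rcases eq_or_lt_of_le (norm_nonneg v) with hv0 | hv0
  · calc Metric.infDist x Q ≤ ‖v‖ := hdistv
      _ = 0 := hv0.symm
      _ ≤ κ * R := mul_nonneg (by linarith) hRnn
  · have hfin : ‖v‖ ≤ κ * R := by
      have h3 : ‖v‖ ^ 2 ≤ κ * ‖v‖ * R :=
        le_trans hnormsq (mul_le_mul_of_nonneg_right hmubound hRnn)
      nlinarith
    exact le_trans hdistv hfin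

end HoffmanSection

section SpectralSection
variable {n : ℕ} {X : Matrix (Fin n) (Fin n) ℝ}

theorem mpow_trace (hX : X.IsHermitian) (r : ℝ) :
    (mpow X r).trace = ∑ i, hX.eigenvalues i ^ r := by
  rw [mpow, dif_pos hX, Matrix.trace_mul_cycle]
  have h1 : (star hX.eigenvectorUnitary : Matrix (Fin n) (Fin n) ℝ) *
      (hX.eigenvectorUnitary : Matrix (Fin n) (Fin n) ℝ) = 1 := by
    have := hX.eigenvectorUnitary.2
    rw [Unitary.mem_iff] at this
    exact_mod_cast this.1
  rw [h1, Matrix.one_mul, Matrix.trace_diagonal]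

theorem sum_sq_eigenvalues (hX : X.IsHermitian) :
    ∑ i, (hX.eigenvalues i)^2 = ∑ j, ∑ k, (X j k)^2 := by
  have hsymm : ∀ j k, X k j = X j k := by
    intro j k
    have := congrFun (congrFun hX j) k
    simpa using this
  have h1 : (star hX.eigenvectorUnitary : Matrix (Fin n) (Fin n) ℝ) *
      (hX.eigenvectorUnitary : Matrix (Fin n) (Fin n) ℝ) = 1 := by
    have := hX.eigenvectorUnitary.2
    rw [Unitary.mem_iff] at this
    exact_mod_cast this.1
  have hXX : X * X = (hX.eigenvectorUnitary : Matrix (Fin n) (Fin n) ℝ) *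
      Matrix.diagonal (fun i => (hX.eigenvalues i)^2) *
      (star hX.eigenvectorUnitary : Matrix (Fin n) (Fin n) ℝ) := by
    conv_lhs => rw [hX.spectral_theorem]
    simp only [Unitary.conjStarAlgAut_apply, Matrix.mul_assoc]
    rw [← Matrix.mul_assoc (star (hX.eigenvectorUnitary : Matrix (Fin n) (Fin n) ℝ))
      (hX.eigenvectorUnitary : Matrix (Fin n) (Fin n) ℝ), h1, Matrix.one_mul,
      ← Matrix.mul_assoc (diagonal _) (diagonal _), Matrix.diagonal_mul_diagonal]
    congr 2
    funext i
    simp [pow_two]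
  have h2 : (X * X).trace = ∑ i, (hX.eigenvalues i)^2 := by
    rw [hXX, Matrix.trace_mul_cycle, h1, Matrix.one_mul, Matrix.trace_diagonal]
  rw [← h2]
  rw [Matrix.trace]
  simp only [Matrix.diag_apply, Matrix.mul_apply]
  exact Finset.sum_congr rfl fun j _ => Finset.sum_congr rfl fun k _ => by
    rw [hsymm j k, pow_two]

theorem toEuclideanLin_eigen (hX : X.IsHermitian) (i : Fin n) :
    X.toEuclideanLin (hX.eigenvectorBasis i) = hX.eigenvalues i • hX.eigenvectorBasis i := by
  apply PiLp.ext
  intro j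
  have h1 := congrFun (hX.mulVec_eigenvectorBasis i) j
  simp only [Matrix.toEuclideanLin_apply]
  simpa using h1

theorem rayleigh_eigen (hX : X.IsHermitian) (i : Fin n) :
    ⟪hX.eigenvectorBasis i, X.toEuclideanLin (hX.eigenvectorBasis i)⟫ = hX.eigenvalues i := by
  rw [toEuclideanLin_eigen hX i, real_inner_smul_right]
  have : ⟪hX.eigenvectorBasis i, hX.eigenvectorBasis i⟫ = 1 := by
    have hnorm := hX.eigenvectorBasis.orthonormal.1 i
    rw [real_inner_self_eq_norm_sq, hnorm, one_pow]
  rw [this, mul_one]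

/-- **Peierls inequality**: for a convex function `f` and any orthonormal basis `w`,
the sum of `f` evaluated at the Rayleigh quotients is at most the sum over eigenvalues. -/
theorem peierls (hX : X.IsHermitian) (w : OrthonormalBasis (Fin n) ℝ (EuclideanSpace ℝ (Fin n)))
    {a b : ℝ} {f : ℝ → ℝ} (hf : ConvexOn ℝ (Set.Icc a b) f)
    (heig : ∀ j, hX.eigenvalues j ∈ Set.Icc a b) :
    ∑ i, f ⟪w i, X.toEuclideanLin (w i)⟫ ≤ ∑ j, f (hX.eigenvalues j) := by
  set v := hX.eigenvectorBasis with hv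
  set lam := hX.eigenvalues with hlam
  set q : Fin n → Fin n → ℝ := fun i j => ⟪v j, w i⟫ ^ 2 with hq
  have hsym : (X.toEuclideanLin : EuclideanSpace ℝ (Fin n) →ₗ[ℝ] EuclideanSpace ℝ (Fin n)).IsSymmetric :=
    Matrix.isHermitian_iff_isSymmetric.mp hX
  have halpha : ∀ i, ⟪w i, X.toEuclideanLin (w i)⟫ = ∑ j, q i j * lam j := by
    intro i
    rw [← v.sum_inner_mul_inner (w i) (X.toEuclideanLin (w i))]
    refine Finset.sum_congr rfl fun j _ => ?_
    have h1 : ⟪v j, X.toEuclideanLin (w i)⟫ = ⟪X.toEuclideanLin (v j), w i⟫ :=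
      (hsym (v j) (w i)).symm
    rw [h1, toEuclideanLin_eigen hX j, real_inner_smul_left]
    have h2 : ⟪w i, v j⟫ = ⟪v j, w i⟫ := real_inner_comm _ _
    rw [h2]
    simp only [hq]
    ring
  have hrow : ∀ i, ∑ j, q i j = 1 := by
    intro i
    have := v.sum_inner_mul_inner (w i) (w i)
    have hnorm : ⟪w i, w i⟫ = (1:ℝ) := by
      have hn := w.orthonormal.1 i
      rw [real_inner_self_eq_norm_sq, hn, one_pow]
    rw [hnorm] at this
    rw [← this]
    refine Finset.sum_congr rfl fun j _ => ?_
    simp only [hq]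
    rw [real_inner_comm (w i) (v j)]
    ring
  have hcol : ∀ j, ∑ i, q i j = 1 := by
    intro j
    have := w.sum_inner_mul_inner (v j) (v j)
    have hnorm : ⟪v j, v j⟫ = (1:ℝ) := by
      have hn := v.orthonormal.1 j
      rw [real_inner_self_eq_norm_sq, hn, one_pow]
    rw [hnorm] at this
    rw [← this]
    refine Finset.sum_congr rfl fun i _ => ?_
    simp only [hq]
    rw [real_inner_comm (v j) (w i)]
    ring
  have hqnn : ∀ i j, 0 ≤ q i j := fun i j => sq_nonneg _
  have hjensen : ∀ i, f (∑ j, q i j * lam j) ≤ ∑ j, q i j * f (lam j) := by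
    intro i
    have := hf.map_sum_le (t := Finset.univ) (w := fun j => q i j) (p := fun j => lam j)
      (fun j _ => hqnn i j) (hrow i) (fun j _ => heig j)
    simpa [smul_eq_mul] using this
  calc ∑ i, f ⟪w i, X.toEuclideanLin (w i)⟫
      = ∑ i, f (∑ j, q i j * lam j) := by
        exact Finset.sum_congr rfl fun i _ => by rw [halpha i]
    _ ≤ ∑ i, ∑ j, q i j * f (lam j) := Finset.sum_le_sum fun i _ => hjensen i
    _ = ∑ j, (∑ i, q i j) * f (lam j) := by
        rw [Finset.sum_comm]
        exact Finset.sum_congr rfl fun j _ => by rw [Finset.sum_mul]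
    _ = ∑ j, f (lam j) := Finset.sum_congr rfl fun j _ => by rw [hcol j, one_mul]

end SpectralSection

/-- Strong convexity of `t ^ (-p)` on `[a,b] ⊆ (0,∞)`: subtracting a suitable quadratic
keeps it convex. -/
theorem convexOn_rpow_sub_quadratic (p c : ℝ) {a b : ℝ} (ha : 0 < a)
    (hc : ∀ t ∈ Set.Icc a b, 2 * c ≤ p * (p + 1) * t ^ (-p - 2)) :
    ConvexOn ℝ (Set.Icc a b) (fun t => t ^ (-p) - c * t ^ 2) := by
  set g : ℝ → ℝ := fun t => t ^ (-p) - c * t ^ 2 with hg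
  set g' : ℝ → ℝ := fun t => (-p) * t ^ (-p - 1) - c * (2 * t) with hg'
  have hderiv : ∀ t : ℝ, 0 < t → HasDerivAt g (g' t) t := by
    intro t ht
    have h1 : HasDerivAt (fun x : ℝ => x ^ (-p)) (-p * t ^ (-p - 1)) t :=
      Real.hasDerivAt_rpow_const (Or.inl ht.ne')
    have h2 : HasDerivAt (fun x : ℝ => c * x ^ 2) (c * (2 * t)) t := by
      have := (hasDerivAt_pow 2 t).const_mul c
      simpa using this
    exact h1.sub h2
  have hderiv2 : ∀ t : ℝ, 0 < t →
      HasDerivAt g' ((-p) * ((-p - 1) * t ^ (-p - 1 - 1)) - c * 2) t := by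
    intro t ht
    have h1 : HasDerivAt (fun x : ℝ => x ^ (-p - 1)) ((-p - 1) * t ^ (-p - 1 - 1)) t :=
      Real.hasDerivAt_rpow_const (Or.inl ht.ne')
    have h1' := h1.const_mul (-p)
    have h2 : HasDerivAt (fun x : ℝ => c * (2 * x)) (c * 2) t := by
      have := (hasDerivAt_id t).const_mul (c * 2)
      simpa [mul_assoc] using this
    exact h1'.sub h2
  have hpos : ∀ t ∈ Set.Icc a b, (0:ℝ) < t := fun t ht => lt_of_lt_of_le ha ht.1
  have hnb : ∀ t : ℝ, 0 < t → deriv g =ᶠ[nhds t] g' := by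
    intro t ht
    filter_upwards [isOpen_Ioi.mem_nhds (Set.mem_Ioi.mpr ht)] with s hs
    exact (hderiv s hs).deriv
  refine convexOn_of_deriv2_nonneg' (convex_Icc a b) ?_ ?_ ?_
  · intro t ht
    exact (hderiv t (hpos t ht)).differentiableAt.differentiableWithinAt
  · intro t ht
    have hdiff : DifferentiableAt ℝ g' t := (hderiv2 t (hpos t ht)).differentiableAt
    exact (hdiff.congr_of_eventuallyEq (hnb t (hpos t ht))).differentiableWithinAt
  · intro t ht
    have htpos := hpos t ht
    have h1 : deriv^[2] g t = deriv (deriv g) t := by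
      simp [Function.iterate_succ, Function.iterate_zero]
    have h2 : deriv (deriv g) t = deriv g' t := Filter.EventuallyEq.deriv_eq (hnb t htpos)
    have h3 : deriv g' t = (-p) * ((-p - 1) * t ^ (-p - 1 - 1)) - c * 2 :=
      (hderiv2 t htpos).deriv
    have h4 : (-p - 1 - 1 : ℝ) = -p - 2 := by ring
    rw [h1, h2, h3, h4]
    have := hc t ht
    nlinarith [this]

/-- Strong midpoint convexity of `X ↦ Tr (X ^ (-p))` in the Frobenius norm. -/
theorem trace_midpoint_gap {n : ℕ} {p c a b : ℝ}
    (hconv : ConvexOn ℝ (Set.Icc a b) (fun t => t ^ (-p) - c * t ^ 2))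
    {Y Z : Matrix (Fin n) (Fin n) ℝ} (hY : Y.IsHermitian) (hZ : Z.IsHermitian)
    (hqY : ∀ w : EuclideanSpace ℝ (Fin n), ‖w‖ = 1 → ⟪w, Y.toEuclideanLin w⟫ ∈ Set.Icc a b)
    (hqZ : ∀ w : EuclideanSpace ℝ (Fin n), ‖w‖ = 1 → ⟪w, Z.toEuclideanLin w⟫ ∈ Set.Icc a b) :
    c / 2 * (∑ j, ∑ k, (Y j k - Z j k) ^ 2) + 2 * (mpow (((1:ℝ)/2) • (Y + Z)) (-p)).trace
      ≤ (mpow Y (-p)).trace + (mpow Z (-p)).trace := by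
  classical
  set M : Matrix (Fin n) (Fin n) ℝ := ((1:ℝ)/2) • (Y + Z) with hMdef
  have hM : M.IsHermitian := by
    show Mᴴ = M
    rw [hMdef, Matrix.conjTranspose_smul, Matrix.conjTranspose_add, hY, hZ]
    norm_num
  set g : ℝ → ℝ := fun t => t ^ (-p) - c * t ^ 2 with hg
  set w := hM.eigenvectorBasis with hw
  have hwnorm : ∀ i, ‖w i‖ = 1 := fun i => hM.eigenvectorBasis.orthonormal.1 i
  have heY : ∀ i, hY.eigenvalues i ∈ Set.Icc a b := fun i => by
    rw [← rayleigh_eigen hY i]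
    exact hqY _ (hY.eigenvectorBasis.orthonormal.1 i)
  have heZ : ∀ i, hZ.eigenvalues i ∈ Set.Icc a b := fun i => by
    rw [← rayleigh_eigen hZ i]
    exact hqZ _ (hZ.eigenvectorBasis.orthonormal.1 i)
  -- Rayleigh quotients of M are averages
  have hTM : ∀ v : EuclideanSpace ℝ (Fin n),
      ⟪v, M.toEuclideanLin v⟫ = (1/2) * ⟪v, Y.toEuclideanLin v⟫
        + (1/2) * ⟪v, Z.toEuclideanLin v⟫ := by
    intro v
    have h1 : M.toEuclideanLin v
        = ((1:ℝ)/2) • (Y.toEuclideanLin v + Z.toEuclideanLin v) := by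
      rw [hMdef, _root_.map_smul, _root_.map_add]
      rfl
    rw [h1, real_inner_smul_right, inner_add_right]
    ring
  set alp : Fin n → ℝ := fun i => ⟪w i, Y.toEuclideanLin (w i)⟫ with halp
  set bet : Fin n → ℝ := fun i => ⟪w i, Z.toEuclideanLin (w i)⟫ with hbet
  have halpmem : ∀ i, alp i ∈ Set.Icc a b := fun i => hqY _ (hwnorm i)
  have hbetmem : ∀ i, bet i ∈ Set.Icc a b := fun i => hqZ _ (hwnorm i)
  have hmu : ∀ i, hM.eigenvalues i = (1/2) * alp i + (1/2) * bet i := by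
    intro i
    rw [← rayleigh_eigen hM i, hTM]
  have heM : ∀ i, hM.eigenvalues i ∈ Set.Icc a b := by
    intro i
    rw [hmu i]
    obtain ⟨h1, h2⟩ := halpmem i
    obtain ⟨h3, h4⟩ := hbetmem i
    constructor <;> [linarith; linarith]
  -- Jensen at each i
  have hjen : ∀ i, g (hM.eigenvalues i) ≤ (1/2) * g (alp i) + (1/2) * g (bet i) := by
    intro i
    have := hconv.2 (halpmem i) (hbetmem i) (by norm_num : (0:ℝ) ≤ 1/2)
      (by norm_num : (0:ℝ) ≤ 1/2) (by norm_num : (1:ℝ)/2 + 1/2 = 1)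
    rw [hmu i]
    simpa [smul_eq_mul] using this
  -- Peierls
  have hpeiY : ∑ i, g (alp i) ≤ ∑ i, g (hY.eigenvalues i) := peierls hY w hconv heY
  have hpeiZ : ∑ i, g (bet i) ≤ ∑ i, g (hZ.eigenvalues i) := peierls hZ w hconv heZ
  -- traces
  have htrY : (mpow Y (-p)).trace = ∑ i, g (hY.eigenvalues i) + c * ∑ j, ∑ k, (Y j k)^2 := by
    rw [mpow_trace hY, ← sum_sq_eigenvalues hY, Finset.mul_sum, ← Finset.sum_add_distrib]
    exact Finset.sum_congr rfl fun i _ => by simp only [hg]; ring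
  have htrZ : (mpow Z (-p)).trace = ∑ i, g (hZ.eigenvalues i) + c * ∑ j, ∑ k, (Z j k)^2 := by
    rw [mpow_trace hZ, ← sum_sq_eigenvalues hZ, Finset.mul_sum, ← Finset.sum_add_distrib]
    exact Finset.sum_congr rfl fun i _ => by simp only [hg]; ring
  have htrM : (mpow M (-p)).trace = ∑ i, g (hM.eigenvalues i) + c * ∑ j, ∑ k, (M j k)^2 := by
    rw [mpow_trace hM, ← sum_sq_eigenvalues hM, Finset.mul_sum, ← Finset.sum_add_distrib]
    exact Finset.sum_congr rfl fun i _ => by simp only [hg]; ring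
  -- quadratic identity
  have hquadid : (∑ j, ∑ k, (Y j k)^2) + (∑ j, ∑ k, (Z j k)^2)
      = (∑ j, ∑ k, (Y j k - Z j k)^2) / 2 + 2 * ∑ j, ∑ k, (M j k)^2 := by
    have : ∀ j k, (Y j k)^2 + (Z j k)^2 = (Y j k - Z j k)^2/2 + 2 * (M j k)^2 := by
      intro j k
      have hMjk : M j k = (1/2) * (Y j k + Z j k) := by
        rw [hMdef]
        simp [Matrix.smul_apply, Matrix.add_apply]
      rw [hMjk]; ring
    rw [← Finset.sum_add_distrib]
    rw [Finset.sum_div, Finset.mul_sum, ← Finset.sum_add_distrib]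
    refine Finset.sum_congr rfl fun j _ => ?_
    rw [← Finset.sum_add_distrib, Finset.sum_div, Finset.mul_sum, ← Finset.sum_add_distrib]
    exact Finset.sum_congr rfl fun k _ => this j k
  -- assemble
  have hGM : ∑ i, g (hM.eigenvalues i)
      ≤ (1/2) * ∑ i, g (alp i) + (1/2) * ∑ i, g (bet i) := by
    have h0 : ∑ i, g (hM.eigenvalues i)
        ≤ ∑ i, ((1/2) * g (alp i) + (1/2) * g (bet i)) :=
      Finset.sum_le_sum fun i _ => hjen i
    rw [Finset.sum_add_distrib, ← Finset.mul_sum, ← Finset.mul_sum] at h0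
    exact h0
  rw [htrY, htrZ, htrM]
  have h1 : ∑ i, g (hM.eigenvalues i)
      ≤ (1/2) * ∑ i, g (hY.eigenvalues i) + (1/2) * ∑ i, g (hZ.eigenvalues i) := by
    refine le_trans hGM ?_
    have h2 : (1/2 : ℝ) * ∑ i, g (alp i) ≤ (1/2) * ∑ i, g (hY.eigenvalues i) := by
      linarith [hpeiY]
    have h3 : (1/2 : ℝ) * ∑ i, g (bet i) ≤ (1/2) * ∑ i, g (hZ.eigenvalues i) := by
      linarith [hpeiZ]
    linarith
  have hc2 : c / 2 * (∑ j, ∑ k, (Y j k - Z j k) ^ 2) + 2 * (c * ∑ j, ∑ k, (M j k)^2)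
      = c * (∑ j, ∑ k, (Y j k)^2) + c * (∑ j, ∑ k, (Z j k)^2) := by
    linear_combination (-c) * hquadid
  linarith [h1, hc2]

/-- The fusion objective `g_F(x) = Tr((C + Aᵀ diag(x) A)^{−p})`, `p > 0`,
is `(M, 1/2)`-sharp for some `M > 0` on the polytope `𝒫 = {x : l ≤ x ≤ u, Σ xᵢ = N}`:
for every `x ∈ 𝒫`, `M·(g_F(x) − g*)^{1/2} ≥ dist(x, Ω*)`, where `g*` is the minimum of
`g_F` on `𝒫` and `Ω*` its set of minimizers. -/
theorem fusion_trace_power_sharp (m n : ℕ) (p : ℝ) (hp : 0 < p)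
    (A : Matrix (Fin m) (Fin n) ℝ) (C : Matrix (Fin n) (Fin n) ℝ) (hC : C.PosDef)
    (l u : EuclideanSpace ℝ (Fin m)) (hl : ∀ i, 0 ≤ l i) (hlu : ∀ i, l i ≤ u i)
    (N : ℝ) (hN : 0 < N)
    (P : Set (EuclideanSpace ℝ (Fin m)))
    (hP : P = {x | (∀ i, l i ≤ x i ∧ x i ≤ u i) ∧ ∑ i, x i = N})
    (hne : P.Nonempty)
    (gF : EuclideanSpace ℝ (Fin m) → ℝ)
    (hgF : gF = fun x => (mpow (C + Aᵀ * Matrix.diagonal (fun i => x i) * A) (-p)).trace) :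
    ∃ M > 0, ∀ x ∈ P,
      Metric.infDist x {y ∈ P | gF y = sInf (gF '' P)} ≤
        M * (gF x - sInf (gF '' P)) ^ ((1 : ℝ) / 2) := by
  classical
  set S : EuclideanSpace ℝ (Fin m) → Matrix (Fin n) (Fin n) ℝ :=
    fun x => C + Aᵀ * Matrix.diagonal (fun i => x i) * A with hS
  have hgFS : ∀ x, gF x = (mpow (S x) (-p)).trace := fun x => by rw [hgF]
  set gstar := sInf (gF '' P) with hgstar
  set Om : Set (EuclideanSpace ℝ (Fin m)) := {y ∈ P | gF y = gstar} with hOm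
  -- entry formula
  have hSentry : ∀ (z : EuclideanSpace ℝ (Fin m)) (j k : Fin n),
      S z j k = C j k + ∑ i, A i j * (z i * A i k) := by
    intro z j k
    show (C + Aᵀ * Matrix.diagonal (fun i => z i) * A) j k = _
    rw [Matrix.add_apply]
    congr 1
    rw [Matrix.mul_assoc, Matrix.mul_apply]
    refine Finset.sum_congr rfl fun i _ => ?_
    rw [Matrix.transpose_apply, Matrix.diagonal_mul]
  -- Hermitian
  have hSH : ∀ z, (S z).IsHermitian := by
    intro z
    show (S z)ᴴ = S z
    apply Matrix.ext
    intro j k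
    rw [Matrix.conjTranspose_apply, star_trivial, hSentry z k j, hSentry z j k]
    have hCs : C k j = C j k := by
      have := congrFun (congrFun hC.1 j) k
      simpa using this
    rw [hCs]
    congr 1
    exact Finset.sum_congr rfl fun i _ => by ring
  -- case n = 0
  rcases Nat.eq_zero_or_pos n with hn0 | hnpos
  · subst hn0
    have hgF0 : ∀ y, gF y = 0 := by
      intro y
      rw [hgFS]
      simp [Matrix.trace]
    have himg : gF '' P = {0} := by
      ext z
      constructor
      · rintro ⟨y, hy, rfl⟩
        simp [hgF0 y]
      · intro hz
        rw [Set.mem_singleton_iff] at hz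
        obtain ⟨y0, hy0⟩ := hne
        exact ⟨y0, hy0, by rw [hgF0 y0, hz]⟩
    have hgstar0 : gstar = 0 := by rw [hgstar, himg, csInf_singleton]
    refine ⟨1, one_pos, fun x hx => ?_⟩
    have hxOm : x ∈ Om := by
      rw [hOm]
      exact ⟨hx, by rw [hgF0 x, hgstar0]⟩
    rw [Metric.infDist_zero_of_mem hxOm, hgF0 x, hgstar0]
    rw [sub_zero, Real.zero_rpow (by norm_num), mul_zero]
  -- n > 0 from here on
  -- coordinates of Euclidean vectors are continuous
  have hcoord : ∀ (Nn : ℕ) (i : Fin Nn), Continuous fun x : EuclideanSpace ℝ (Fin Nn) => x i := by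
    intro Nn i
    have h1 : (fun x : EuclideanSpace ℝ (Fin Nn) => x i)
        = fun x => ⟪EuclideanSpace.single i (1:ℝ), x⟫ := by
      funext x
      rw [EuclideanSpace.inner_single_left]
      simp
    rw [h1]
    exact continuous_const.inner continuous_id
  -- inner products as sums
  have hinner : ∀ (Nn : ℕ) (x y : EuclideanSpace ℝ (Fin Nn)), ⟪x, y⟫ = ∑ i, x i * y i := by
    intro Nn x y
    simp [PiLp.inner_apply, RCLike.inner_apply, mul_comm]
  have htoE : ∀ (X : Matrix (Fin n) (Fin n) ℝ) (v : EuclideanSpace ℝ (Fin n)) (k : Fin n),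
      (X.toEuclideanLin v) k = (X *ᵥ ⇑v) k := by
    intro X v k
    simp [Matrix.toEuclideanLin_apply]
  -- quadratic form splitting
  have hprodentry : ∀ (z : EuclideanSpace ℝ (Fin m)) (j k : Fin n),
      (Aᵀ * Matrix.diagonal (fun i => z i) * A) j k = ∑ i, A i j * (z i * A i k) := by
    intro z j k
    rw [Matrix.mul_assoc, Matrix.mul_apply]
    refine Finset.sum_congr rfl fun i _ => ?_
    rw [Matrix.transpose_apply, Matrix.diagonal_mul]
  have hsplit : ∀ (z : EuclideanSpace ℝ (Fin m)) (v : EuclideanSpace ℝ (Fin n)),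
      ⟪v, (S z).toEuclideanLin v⟫
        = ⟪v, C.toEuclideanLin v⟫ + ∑ i, z i * ((A *ᵥ ⇑v) i)^2 := by
    intro z v
    have hAv : ∀ i, (A *ᵥ ⇑v) i = ∑ k, A i k * v k := by
      intro i
      simp [Matrix.mulVec, dotProduct]
    have hprodvec : ∀ k : Fin n, ((Aᵀ * Matrix.diagonal (fun i => z i) * A) *ᵥ ⇑v) k
        = ∑ i, A i k * (z i * ((A *ᵥ ⇑v) i)) := by
      intro k
      have h1 : ((Aᵀ * Matrix.diagonal (fun i => z i) * A) *ᵥ ⇑v) k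
          = ∑ l, (∑ i, A i k * (z i * A i l)) * v l := by
        simp only [Matrix.mulVec, dotProduct]
        refine Finset.sum_congr rfl fun l _ => ?_
        exact congrArg (· * v l) (hprodentry z k l)
      rw [h1]
      have h2 : ∀ l, (∑ i, A i k * (z i * A i l)) * v l
          = ∑ i, A i k * (z i * (A i l * v l)) := by
        intro l
        rw [Finset.sum_mul]
        exact Finset.sum_congr rfl fun i _ => by ring
      rw [Finset.sum_congr rfl fun l _ => h2 l, Finset.sum_comm]
      refine Finset.sum_congr rfl fun i _ => ?_
      rw [hAv i, Finset.mul_sum, Finset.mul_sum]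
    have hmv : ∀ k, ((S z).toEuclideanLin v) k
        = (C.toEuclideanLin v) k + ((Aᵀ * Matrix.diagonal (fun i => z i) * A) *ᵥ ⇑v) k := by
      intro k
      rw [htoE, htoE]
      show ((C + Aᵀ * Matrix.diagonal (fun i => z i) * A) *ᵥ ⇑v) k = _
      rw [Matrix.add_mulVec]
      rfl
    rw [hinner n, hinner n]
    have h3 : ∑ k, v k * ((S z).toEuclideanLin v) k
        = ∑ k, v k * (C.toEuclideanLin v) k
          + ∑ k, v k * ((Aᵀ * Matrix.diagonal (fun i => z i) * A) *ᵥ ⇑v) k := by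
      rw [← Finset.sum_add_distrib]
      refine Finset.sum_congr rfl fun k _ => ?_
      rw [hmv k]
      ring
    rw [h3]
    congr 1
    have h4 : ∀ k, v k * ((Aᵀ * Matrix.diagonal (fun i => z i) * A) *ᵥ ⇑v) k
        = ∑ i, z i * ((A *ᵥ ⇑v) i) * (A i k * v k) := by
      intro k
      rw [hprodvec k, Finset.mul_sum]
      exact Finset.sum_congr rfl fun i _ => by ring
    rw [Finset.sum_congr rfl fun k _ => h4 k, Finset.sum_comm]
    refine Finset.sum_congr rfl fun i _ => ?_
    have h5 : ∑ k, z i * ((A *ᵥ ⇑v) i) * (A i k * v k)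
        = z i * ((A *ᵥ ⇑v) i) * ∑ k, A i k * v k := by
      rw [Finset.mul_sum]
    rw [h5, ← hAv i]
    ring
  -- compactness of P
  have hPclosed : IsClosed P := by
    rw [hP]
    have h1 : {x : EuclideanSpace ℝ (Fin m) | (∀ i, l i ≤ x i ∧ x i ≤ u i) ∧ ∑ i, x i = N}
        = (⋂ i, ({x : EuclideanSpace ℝ (Fin m) | l i ≤ x i} ∩ {x | x i ≤ u i}))
          ∩ {x | ∑ i, x i = N} := by
      ext x
      simp only [Set.mem_setOf_eq, Set.mem_inter_iff, Set.mem_iInter, forall_and]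
    rw [h1]
    refine IsClosed.inter (isClosed_iInter fun i => IsClosed.inter ?_ ?_) ?_
    · exact isClosed_le continuous_const (hcoord m i)
    · exact isClosed_le (hcoord m i) continuous_const
    · exact isClosed_eq (continuous_finset_sum _ fun i _ => hcoord m i) continuous_const
  have hPbdd : Bornology.IsBounded P := by
    refine (Metric.isBounded_closedBall (x := (0 : EuclideanSpace ℝ (Fin m)))
      (r := ‖u‖)).subset ?_
    intro x hx
    rw [hP] at hx
    rw [Metric.mem_closedBall, dist_zero_right, EuclideanSpace.norm_eq, EuclideanSpace.norm_eq]
    refine Real.sqrt_le_sqrt (Finset.sum_le_sum fun i _ => ?_)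
    have h1 := (hx.1 i).1
    have h2 := (hx.1 i).2
    have h3 := hl i
    rw [Real.norm_eq_abs, Real.norm_eq_abs, sq_abs, sq_abs]
    nlinarith
  have hPcomp : IsCompact P := Metric.isCompact_of_isClosed_isBounded hPclosed hPbdd
  -- sphere
  set sph : Set (EuclideanSpace ℝ (Fin n)) := Metric.sphere 0 1 with hsph
  have hsphcomp : IsCompact sph := isCompact_sphere 0 1
  have hsphne : sph.Nonempty := by
    refine ⟨EuclideanSpace.single ⟨0, hnpos⟩ 1, ?_⟩
    simp [hsph, EuclideanSpace.norm_single]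
  have hsphmem : ∀ v : EuclideanSpace ℝ (Fin n), ‖v‖ = 1 → v ∈ sph := by
    intro v hv
    simp [hsph, mem_sphere_iff_norm, hv]
  -- min of the C-quadratic form on the sphere
  have hTCcont : Continuous fun v : EuclideanSpace ℝ (Fin n) => ⟪v, C.toEuclideanLin v⟫ :=
    continuous_id.inner (C.toEuclideanLin.continuous_of_finiteDimensional)
  obtain ⟨w0, hw0mem, hw0min⟩ := hsphcomp.exists_isMinOn hsphne hTCcont.continuousOn
  set a := ⟪w0, C.toEuclideanLin w0⟫ with ha
  have hapos : 0 < a := by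
    have hw0n : ‖w0‖ = 1 := by simpa [hsph, mem_sphere_iff_norm] using hw0mem
    have hw0ne : w0 ≠ 0 := by
      intro h
      rw [h, norm_zero] at hw0n
      norm_num at hw0n
    have hw0fne : (fun i => w0 i) ≠ (0 : Fin n → ℝ) := by
      intro h
      apply hw0ne
      apply PiLp.ext
      intro i
      exact congrFun h i
    have hpd := hC.dotProduct_mulVec_pos (x := fun i => w0 i) hw0fne
    have haeq : a = dotProduct (star (fun i => w0 i)) (C *ᵥ (fun i => w0 i)) := by
      rw [ha, hinner n]
      simp only [dotProduct, Pi.star_apply, star_trivial]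
      refine Finset.sum_congr rfl fun k _ => ?_
      rw [htoE]
    rw [haeq]
    simpa using hpd
  -- max of the S-quadratic form on P × sphere
  set Phi : EuclideanSpace ℝ (Fin m) × EuclideanSpace ℝ (Fin n) → ℝ :=
    fun q => ⟪q.2, (S q.1).toEuclideanLin q.2⟫ with hPhi
  have hPhieq : ∀ q : EuclideanSpace ℝ (Fin m) × EuclideanSpace ℝ (Fin n),
      Phi q = ⟪q.2, C.toEuclideanLin q.2⟫ + ∑ i, q.1 i * ((A *ᵥ ⇑q.2) i)^2 :=
    fun q => hsplit q.1 q.2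
  have hPhicont : Continuous Phi := by
    have hPhifun : Phi = fun q : EuclideanSpace ℝ (Fin m) × EuclideanSpace ℝ (Fin n) =>
        ⟪q.2, C.toEuclideanLin q.2⟫ + ∑ i, q.1 i * ((A *ᵥ ⇑q.2) i)^2 := funext hPhieq
    rw [hPhifun]
    refine Continuous.add ?_ ?_
    · exact continuous_snd.inner
        ((C.toEuclideanLin.continuous_of_finiteDimensional).comp continuous_snd)
    · refine continuous_finset_sum _ fun i _ => ?_
      refine Continuous.mul ((hcoord m i).comp continuous_fst) ?_
      have hAvc : Continuous fun q : EuclideanSpace ℝ (Fin m) × EuclideanSpace ℝ (Fin n) =>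
          (A *ᵥ ⇑q.2) i := by
        have h1 : (fun q : EuclideanSpace ℝ (Fin m) × EuclideanSpace ℝ (Fin n) =>
            (A *ᵥ ⇑q.2) i) = fun q => ∑ k, A i k * q.2 k := by
          funext q
          simp [Matrix.mulVec, dotProduct]
        rw [h1]
        exact continuous_finset_sum _ fun k _ =>
          continuous_const.mul ((hcoord n k).comp continuous_snd)
      exact hAvc.pow 2
  obtain ⟨q0, hq0mem, hq0max⟩ := (hPcomp.prod hsphcomp).exists_isMaxOn
    (hne.prod hsphne) hPhicont.continuousOn
  set b := Phi q0 with hb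
  -- all quadratic forms over P and unit vectors are in [a, b]
  have hquad : ∀ x ∈ P, ∀ v : EuclideanSpace ℝ (Fin n), ‖v‖ = 1 →
      ⟪v, (S x).toEuclideanLin v⟫ ∈ Set.Icc a b := by
    intro x hx v hv
    constructor
    · rw [hsplit x v]
      have h1 : a ≤ ⟪v, C.toEuclideanLin v⟫ := hw0min (hsphmem v hv)
      have h2 : 0 ≤ ∑ i, x i * ((A *ᵥ ⇑v) i)^2 := by
        refine Finset.sum_nonneg fun i _ => mul_nonneg ?_ (sq_nonneg _)
        rw [hP] at hx
        exact le_trans (hl i) (hx.1 i).1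
      linarith
    · have h3 := hq0max (Set.mk_mem_prod hx (hsphmem v hv))
      exact h3
  have hab : a ≤ b := by
    obtain ⟨x0, hx0⟩ := hne
    have := hquad x0 hx0 w0 (by simpa [hsph, mem_sphere_iff_norm] using hw0mem)
    exact le_trans this.1 this.2
  have hbpos : 0 < b := lt_of_lt_of_le hapos hab
  -- the strong convexity constant
  set c := p * (p + 1) * b ^ (-p - 2) / 2 with hc
  have hcpos : 0 < c := by
    have h1 : (0:ℝ) < b ^ (-p - 2) := Real.rpow_pos_of_pos hbpos _
    have h2 : 0 < p * (p + 1) := by nlinarith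
    positivity
  have hconv : ConvexOn ℝ (Set.Icc a b) (fun t => t ^ (-p) - c * t ^ 2) := by
    refine convexOn_rpow_sub_quadratic p c hapos fun t ht => ?_
    have htpos : 0 < t := lt_of_lt_of_le hapos ht.1
    have h1 : b ^ (-p - 2) ≤ t ^ (-p - 2) :=
      Real.rpow_le_rpow_of_nonpos htpos ht.2 (by linarith)
    have h2 : 0 ≤ p * (p + 1) := by nlinarith
    calc 2 * c = p * (p + 1) * b ^ (-p - 2) := by rw [hc]; ring
      _ ≤ p * (p + 1) * t ^ (-p - 2) := mul_le_mul_of_nonneg_left h1 h2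
  -- midpoints
  have hmidco : ∀ (x y : EuclideanSpace ℝ (Fin m)) (i : Fin m),
      (((1:ℝ)/2) • (x + y)) i = (x i + y i)/2 := by
    intro x y i
    rw [PiLp.smul_apply, PiLp.add_apply]
    simp [smul_eq_mul]
    ring
  have hmidP : ∀ x ∈ P, ∀ y ∈ P, ((1:ℝ)/2) • (x + y) ∈ P := by
    intro x hx y hy
    rw [hP] at hx hy ⊢
    constructor
    · intro i
      rw [hmidco x y i]
      obtain ⟨h1, h2⟩ := hx.1 i
      obtain ⟨h3, h4⟩ := hy.1 i
      constructor <;> [linarith; linarith]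
    · rw [Finset.sum_congr rfl fun i _ => hmidco x y i, ← Finset.sum_div,
        Finset.sum_add_distrib, hx.2, hy.2]
      ring
  have hSaff : ∀ x y : EuclideanSpace ℝ (Fin m),
      S (((1:ℝ)/2) • (x + y)) = ((1:ℝ)/2) • (S x + S y) := by
    intro x y
    apply Matrix.ext
    intro j k
    rw [Matrix.smul_apply, Matrix.add_apply, hSentry _ j k, hSentry x j k, hSentry y j k]
    have h1 : ∑ i, A i j * ((((1:ℝ)/2) • (x + y)) i * A i k)
        = ∑ i, (A i j * (x i * A i k) + A i j * (y i * A i k))/2 := by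
      refine Finset.sum_congr rfl fun i _ => ?_
      rw [hmidco x y i]
      ring
    rw [h1, ← Finset.sum_div, Finset.sum_add_distrib, smul_eq_mul]
    ring
  -- key growth inequality
  have hgrow : ∀ x ∈ P, ∀ y ∈ P,
      c / 2 * (∑ j, ∑ k, (S x j k - S y j k) ^ 2) + 2 * gF (((1:ℝ)/2) • (x + y))
        ≤ gF x + gF y := by
    intro x hx y hy
    rw [hgFS x, hgFS y, hgFS _, hSaff x y]
    exact trace_midpoint_gap hconv (hSH x) (hSH y)
      (fun w hw => hquad x hx w hw) (fun w hw => hquad y hy w hw)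
  -- lower bound for gF and the infimum
  have hBdd : BddBelow (gF '' P) := by
    refine ⟨0, fun z hz => ?_⟩
    obtain ⟨y, hy, rfl⟩ := hz
    rw [hgFS y, mpow_trace (hSH y)]
    refine Finset.sum_nonneg fun i _ => Real.rpow_nonneg ?_ _
    have := rayleigh_eigen (hSH y) i
    have h2 := hquad y hy _ ((hSH y).eigenvectorBasis.orthonormal.1 i)
    rw [this] at h2
    linarith [h2.1, hapos]
  have hIC : ∀ y ∈ P, gstar ≤ gF y := fun y hy =>
    csInf_le hBdd (Set.mem_image_of_mem gF hy)
  -- either the minimizer set is empty (trivial) or pick a minimizer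
  rcases Set.eq_empty_or_nonempty Om with hOme | ⟨xs, hxs⟩
  · refine ⟨1, one_pos, fun x hx => ?_⟩
    rw [hOm] at hOme
    rw [hOm, hOme, Metric.infDist_empty]
    have h1 : 0 ≤ gF x - gstar := by linarith [hIC x hx]
    positivity
  obtain ⟨hxsP, hxsmin⟩ : xs ∈ P ∧ gF xs = gstar := hxs
  -- quadratic growth
  have hgrowth : ∀ x ∈ P, c / 2 * (∑ j, ∑ k, (S x j k - S xs j k) ^ 2) ≤ gF x - gstar := by
    intro x hx
    have h1 := hgrow x hx xs hxsP
    have h2 := hIC _ (hmidP x hx xs hxsP)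
    rw [hxsmin] at h1
    linarith
  -- membership in Om is equivalent to S y = S xs
  have hgeq : ∀ y ∈ P, (gF y = gstar ↔ S y = S xs) := by
    intro y hy
    constructor
    · intro hgy
      have h1 := hgrowth y hy
      rw [hgy, sub_self] at h1
      have h2 : ∀ j k, (S y j k - S xs j k)^2 = 0 := by
        have hS0 : ∑ j, ∑ k, (S y j k - S xs j k)^2 = 0 := by
          refine le_antisymm (by nlinarith [hcpos]) ?_
          exact Finset.sum_nonneg fun j _ => Finset.sum_nonneg fun k _ => sq_nonneg _
        intro j k
        have hj := (Finset.sum_eq_zero_iff_of_nonneg (fun j _ =>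
          Finset.sum_nonneg fun k _ => sq_nonneg _)).mp hS0 j (Finset.mem_univ j)
        exact (Finset.sum_eq_zero_iff_of_nonneg (fun k _ => sq_nonneg _)).mp hj k
          (Finset.mem_univ k)
      apply Matrix.ext
      intro j k
      have := h2 j k
      have := pow_eq_zero_iff (n := 2) (by norm_num) |>.mp this
      linarith [this]
    · intro hSy
      rw [hgFS y, hSy, ← hgFS xs, hxsmin]
  -- Hoffman setup: linear constraint description of Om
  set ones : EuclideanSpace ℝ (Fin m) := (WithLp.equiv 2 (Fin m → ℝ)).symm (fun _ => (1:ℝ))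
    with hones
  set rowp : Fin n → Fin n → EuclideanSpace ℝ (Fin m) :=
    fun j k => (WithLp.equiv 2 (Fin m → ℝ)).symm (fun i => A i j * A i k) with hrowp
  set β : ((Fin m × Bool) ⊕ Bool) ⊕ ((Fin n × Fin n) × Bool) → EuclideanSpace ℝ (Fin m) :=
    fun t => match t with
    | .inl (.inl (i, true)) => EuclideanSpace.single i 1
    | .inl (.inl (i, false)) => -EuclideanSpace.single i 1
    | .inl (.inr true) => ones
    | .inl (.inr false) => -ones
    | .inr ((j, k), true) => rowp j k
    | .inr ((j, k), false) => -(rowp j k) with hβ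
  set dv : Fin n → Fin n → ℝ := fun j k => ∑ i, A i j * (xs i * A i k) with hdv
  set cc : ((Fin m × Bool) ⊕ Bool) ⊕ ((Fin n × Fin n) × Bool) → ℝ :=
    fun t => match t with
    | .inl (.inl (i, true)) => u i
    | .inl (.inl (i, false)) => -(l i)
    | .inl (.inr true) => N
    | .inl (.inr false) => -N
    | .inr ((j, k), true) => dv j k
    | .inr ((j, k), false) => -(dv j k) with hcc
  have hip1 : ∀ (i : Fin m) (y : EuclideanSpace ℝ (Fin m)),
      ⟪EuclideanSpace.single i (1:ℝ), y⟫ = y i := by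
    intro i y
    rw [EuclideanSpace.inner_single_left]
    simp
  have hip2 : ∀ y : EuclideanSpace ℝ (Fin m), ⟪ones, y⟫ = ∑ i, y i := by
    intro y
    rw [hinner m]
    refine Finset.sum_congr rfl fun i _ => ?_
    have : ones i = 1 := rfl
    rw [this, one_mul]
  have hip3 : ∀ (j k : Fin n) (y : EuclideanSpace ℝ (Fin m)),
      ⟪rowp j k, y⟫ = ∑ i, A i j * (y i * A i k) := by
    intro j k y
    rw [hinner m]
    refine Finset.sum_congr rfl fun i _ => ?_
    have : rowp j k i = A i j * A i k := rfl
    rw [this]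
    ring
  have hSdiff : ∀ (y : EuclideanSpace ℝ (Fin m)) (j k : Fin n),
      S y j k - S xs j k = ⟪rowp j k, y⟫ - dv j k := by
    intro y j k
    rw [hSentry y j k, hSentry xs j k, hip3]
    have : dv j k = ∑ i, A i j * (xs i * A i k) := rfl
    rw [this]
    ring
  set Q : Set (EuclideanSpace ℝ (Fin m)) := {y | ∀ t, ⟪β t, y⟫ ≤ cc t} with hQ
  have hyQ : ∀ y : EuclideanSpace ℝ (Fin m), (y ∈ P ∧ S y = S xs) ↔ y ∈ Q := by
    intro y
    rw [hP, hQ]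
    constructor
    · rintro ⟨⟨hbox, hsum⟩, hSy⟩ t
      have hSyjk : ∀ j k, ⟪rowp j k, y⟫ = dv j k := by
        intro j k
        have h1 : S y j k - S xs j k = 0 := by rw [hSy, sub_self]
        rw [hSdiff y j k] at h1
        linarith
      rcases t with (⟨i, bo⟩ | bo) | ⟨⟨j, k⟩, bo⟩ <;> cases bo <;>
        simp only [hβ, hcc, inner_neg_left, hip1, hip2]
      · linarith [(hbox i).1]
      · exact (hbox i).2
      · linarith [hsum]
      · exact le_of_eq hsum
      · linarith [hSyjk j k]
      · exact le_of_eq (hSyjk j k)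
    · intro hQy
      have hb1 : ∀ i, l i ≤ y i := by
        intro i
        have := hQy (.inl (.inl (i, false)))
        simp only [hβ, hcc, inner_neg_left, hip1] at this
        linarith
      have hb2 : ∀ i, y i ≤ u i := by
        intro i
        have := hQy (.inl (.inl (i, true)))
        simpa only [hβ, hcc, hip1] using this
      have hb3 : ∑ i, y i = N := by
        have h1 := hQy (.inl (.inr true))
        have h2 := hQy (.inl (.inr false))
        simp only [hβ, hcc, inner_neg_left, hip2] at h1 h2
        linarith
      have hb4 : S y = S xs := by
        apply Matrix.ext
        intro j k
        have h1 := hQy (.inr ((j, k), true))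
        have h2 := hQy (.inr ((j, k), false))
        simp only [hβ, hcc, inner_neg_left] at h1 h2
        have h3 : ⟪rowp j k, y⟫ = dv j k := by linarith
        have := hSdiff y j k
        rw [h3, sub_self] at this
        linarith
      exact ⟨⟨fun i => ⟨hb1 i, hb2 i⟩, hb3⟩, hb4⟩
  have hQOm : Q = Om := by
    ext y
    rw [← hyQ y, hOm]
    constructor
    · rintro ⟨h1, h2⟩
      exact ⟨h1, (hgeq y h1).mpr h2⟩
    · rintro ⟨h1, h2⟩
      exact ⟨h1, (hgeq y h1).mp h2⟩
  have hQne : Q.Nonempty := ⟨xs, (hyQ xs).mp ⟨hxsP, rfl⟩⟩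
  obtain ⟨κ, hκpos, hκ⟩ := hoffman_bound β cc Q hQ hQne
  refine ⟨κ * Real.sqrt ((n:ℝ)^2 * (2/c)) + 1, by positivity, fun x hx => ?_⟩
  -- residual computation
  have hxres : ∀ t, t ∈ (Set.univ : Set (((Fin m × Bool) ⊕ Bool))) → True := fun _ _ => trivial
  have hres : ∑ t, max (⟪β t, x⟫ - cc t) 0 = ∑ j, ∑ k, |S x j k - S xs j k| := by
    rw [Fintype.sum_sum_type]
    have hxP := hx
    rw [hP] at hxP
    have hz1 : ∑ t : (Fin m × Bool) ⊕ Bool, max (⟪β (.inl t), x⟫ - cc (.inl t)) 0 = 0 := by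
      refine Finset.sum_eq_zero fun t _ => ?_
      have : ⟪β (.inl t), x⟫ - cc (.inl t) ≤ 0 := by
        rcases t with ⟨i, bo⟩ | bo <;> cases bo <;>
          simp only [hβ, hcc, inner_neg_left, hip1, hip2]
        · linarith [(hxP.1 i).1]
        · linarith [(hxP.1 i).2]
        · linarith [hxP.2]
        · linarith [hxP.2]
      exact max_eq_right this
    rw [hz1, zero_add, Fintype.sum_prod_type, Fintype.sum_prod_type]
    refine Finset.sum_congr rfl fun j _ => Finset.sum_congr rfl fun k _ => ?_
    rw [Fintype.sum_bool]
    have he1 : ⟪β (.inr ((j, k), true)), x⟫ - cc (.inr ((j, k), true))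
        = S x j k - S xs j k := by
      simp only [hβ, hcc]
      linear_combination (-1:ℝ) * hSdiff x j k
    have he2 : ⟪β (.inr ((j, k), false)), x⟫ - cc (.inr ((j, k), false))
        = -(S x j k - S xs j k) := by
      simp only [hβ, hcc, inner_neg_left]
      linear_combination hSdiff x j k
    rw [he1, he2, max_zero_add_max_neg_zero_eq_abs_self]
  -- Cauchy–Schwarz on the residual
  have hε : 0 ≤ gF x - gstar := by linarith [hIC x hx]
  have hCS : ∑ j, ∑ k, |S x j k - S xs j k|
      ≤ Real.sqrt ((n:ℝ)^2 * (∑ j, ∑ k, (S x j k - S xs j k)^2)) := by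
    have habs : ∀ q : Fin n × Fin n, (0:ℝ) ≤ |S x q.1 q.2 - S xs q.1 q.2| :=
      fun q => abs_nonneg _
    have hflat1 : ∑ j, ∑ k, |S x j k - S xs j k|
        = ∑ q : Fin n × Fin n, |S x q.1 q.2 - S xs q.1 q.2| := by
      rw [Fintype.sum_prod_type]
    have hflat2 : ∑ j, ∑ k, (S x j k - S xs j k)^2
        = ∑ q : Fin n × Fin n, (S x q.1 q.2 - S xs q.1 q.2)^2 := by
      rw [Fintype.sum_prod_type]
    rw [hflat1, hflat2]
    have h1 := Finset.sum_mul_sq_le_sq_mul_sq Finset.univ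
      (fun _ : Fin n × Fin n => (1:ℝ)) (fun q => |S x q.1 q.2 - S xs q.1 q.2|)
    have h2 : (∑ q : Fin n × Fin n, |S x q.1 q.2 - S xs q.1 q.2|)^2
        ≤ (n:ℝ)^2 * ∑ q : Fin n × Fin n, (S x q.1 q.2 - S xs q.1 q.2)^2 := by
      have h3 : ∑ _q : Fin n × Fin n, ((1:ℝ))^2 = (n:ℝ)^2 := by
        rw [Finset.sum_const]
        simp [Fintype.card_prod, Fintype.card_fin]
        ring
      have h4 : ∀ q : Fin n × Fin n, |S x q.1 q.2 - S xs q.1 q.2|^2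
          = (S x q.1 q.2 - S xs q.1 q.2)^2 := fun q => sq_abs _
      calc (∑ q : Fin n × Fin n, |S x q.1 q.2 - S xs q.1 q.2|)^2
          = (∑ q : Fin n × Fin n, 1 * |S x q.1 q.2 - S xs q.1 q.2|)^2 := by
            simp
        _ ≤ (∑ _q : Fin n × Fin n, ((1:ℝ))^2)
            * ∑ q : Fin n × Fin n, |S x q.1 q.2 - S xs q.1 q.2|^2 := h1
        _ = (n:ℝ)^2 * ∑ q : Fin n × Fin n, (S x q.1 q.2 - S xs q.1 q.2)^2 := by
            rw [h3]
            congr 1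
            exact Finset.sum_congr rfl fun q _ => h4 q
    have h5 : 0 ≤ ∑ q : Fin n × Fin n, |S x q.1 q.2 - S xs q.1 q.2| :=
      Finset.sum_nonneg fun q _ => abs_nonneg _
    have h6 : (0:ℝ) ≤ (n:ℝ)^2 * ∑ q : Fin n × Fin n, (S x q.1 q.2 - S xs q.1 q.2)^2 :=
      mul_nonneg (sq_nonneg _) (Finset.sum_nonneg fun q _ => sq_nonneg _)
    exact (Real.le_sqrt h5 h6).mpr h2
  have hSSb : (n:ℝ)^2 * (∑ j, ∑ k, (S x j k - S xs j k)^2)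
      ≤ (n:ℝ)^2 * (2/c) * (gF x - gstar) := by
    have h1 := hgrowth x hx
    have h2 : (∑ j, ∑ k, (S x j k - S xs j k)^2) ≤ (2/c) * (gF x - gstar) := by
      rw [div_mul_eq_mul_div, le_div_iff₀ hcpos]
      nlinarith [h1]
    calc (n:ℝ)^2 * (∑ j, ∑ k, (S x j k - S xs j k)^2)
        ≤ (n:ℝ)^2 * ((2/c) * (gF x - gstar)) :=
          mul_le_mul_of_nonneg_left h2 (sq_nonneg _)
      _ = (n:ℝ)^2 * (2/c) * (gF x - gstar) := by ring
  have hfinal : Metric.infDist x Om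
      ≤ (κ * Real.sqrt ((n:ℝ)^2 * (2/c)) + 1) * (gF x - gstar) ^ ((1:ℝ)/2) := by
    have hrpow : (gF x - gstar) ^ ((1:ℝ)/2) = Real.sqrt (gF x - gstar) :=
      (Real.sqrt_eq_rpow _).symm
    calc Metric.infDist x Om = Metric.infDist x Q := by rw [hQOm]
      _ ≤ κ * ∑ t, max (⟪β t, x⟫ - cc t) 0 := hκ x
      _ = κ * ∑ j, ∑ k, |S x j k - S xs j k| := by rw [hres]
      _ ≤ κ * Real.sqrt ((n:ℝ)^2 * (∑ j, ∑ k, (S x j k - S xs j k)^2)) :=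
          mul_le_mul_of_nonneg_left hCS hκpos.le
      _ ≤ κ * Real.sqrt ((n:ℝ)^2 * (2/c) * (gF x - gstar)) := by
          refine mul_le_mul_of_nonneg_left (Real.sqrt_le_sqrt ?_) hκpos.le
          exact hSSb
      _ = κ * (Real.sqrt ((n:ℝ)^2 * (2/c)) * Real.sqrt (gF x - gstar)) := by
          rw [Real.sqrt_mul (by positivity)]
      _ ≤ (κ * Real.sqrt ((n:ℝ)^2 * (2/c)) + 1) * (gF x - gstar) ^ ((1:ℝ)/2) := by
          rw [hrpow]
          have h6 : 0 ≤ Real.sqrt (gF x - gstar) := Real.sqrt_nonneg _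
          nlinarith
  exact hfinal
end

section
/- Let p > 0 and α > 0 be real numbers. The function g(X) = Tr(X^{−p}) is μ-strongly convex with respect to the Frobenius norm on the convex set 𝒟 = {X ∈ ℝ^{n×n} : X symmetric positive definite, λ_max(X) ≤ α}, with μ = p(p+1)/α^{p+2}; that is, X ↦ Tr(X^{−p}) − (μ/2)·‖X‖_F² is convex on 𝒟. -/
open Matrix

section Aux

variable {n : ℕ}

/-- The scalar function `t ↦ t^(-p) - c t²` is convex on `(0, α]`. -/
lemma auxScalarConvex (p α : ℝ) (hp : 0 < p) (hα : 0 < α) :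
    ConvexOn ℝ (Set.Ioc (0:ℝ) α)
      (fun t : ℝ => t ^ (-p) - p * (p + 1) / α ^ (p + 2) / 2 * t ^ 2) := by
  set c : ℝ := p * (p + 1) / α ^ (p + 2) / 2 with hc
  have hαp : 0 < α ^ (p + 2) := Real.rpow_pos_of_pos hα _
  apply convexOn_of_hasDerivWithinAt2_nonneg (f' := fun t => (-p) * t ^ (-p - 1) - c * (2 * t))
    (f'' := fun t => (-p) * ((-p - 1) * t ^ (-p - 1 - 1)) - c * 2)
    (convex_Ioc 0 α)
  · apply ContinuousOn.sub
    · intro t ht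
      exact (Real.continuousAt_rpow_const t (-p) (Or.inl (ne_of_gt ht.1))).continuousWithinAt
    · exact (continuousOn_const.mul ((continuousOn_id' _).pow 2))
  · intro x hx
    rw [interior_Ioc] at hx
    have h1 : HasDerivAt (fun t : ℝ => t ^ (-p)) ((-p) * x ^ (-p - 1)) x :=
      Real.hasDerivAt_rpow_const (Or.inl (ne_of_gt hx.1))
    have h2 : HasDerivAt (fun t : ℝ => c * t ^ 2) (c * (2 * x)) x := by
      simpa using (hasDerivAt_pow 2 x).const_mul c
    exact (h1.sub h2).hasDerivWithinAt
  · intro x hx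
    rw [interior_Ioc] at hx
    have h1 : HasDerivAt (fun t : ℝ => (-p) * t ^ (-p - 1))
        ((-p) * ((-p - 1) * x ^ (-p - 1 - 1))) x :=
      (Real.hasDerivAt_rpow_const (Or.inl (ne_of_gt hx.1))).const_mul (-p)
    have h2 : HasDerivAt (fun t : ℝ => c * (2 * t)) (c * 2) x := by
      simpa [mul_comm] using ((hasDerivAt_id x).const_mul 2).const_mul c
    exact (h1.sub h2).hasDerivWithinAt
  · intro x hx
    rw [interior_Ioc] at hx
    have hxpos := hx.1
    have hxe : -p - 1 - 1 = -(p + 2) := by ring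
    have hxp : x ^ (-(p + 2)) = (x ^ (p + 2))⁻¹ := Real.rpow_neg hxpos.le _
    have hle : x ^ (p + 2) ≤ α ^ (p + 2) :=
      Real.rpow_le_rpow hxpos.le hx.2.le (by positivity)
    have hxpp : 0 < x ^ (p + 2) := Real.rpow_pos_of_pos hxpos _
    have hinv : (α ^ (p + 2))⁻¹ ≤ (x ^ (p + 2))⁻¹ := inv_anti₀ hxpp hle
    have key : p * (p + 1) / α ^ (p + 2) ≤ p * (p + 1) * (x ^ (p + 2))⁻¹ := by
      rw [div_eq_mul_inv]
      exact mul_le_mul_of_nonneg_left hinv (by positivity)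
    have hc2 : c * 2 = p * (p + 1) / α ^ (p + 2) := by rw [hc]; ring
    rw [hxe, hxp, hc2]
    nlinarith [key]

lemma unitary_row_sq_sum (M : Matrix (Fin n) (Fin n) ℝ)
    (hM : M ∈ Matrix.unitaryGroup (Fin n) ℝ) (i : Fin n) :
    ∑ j, (M i j) ^ 2 = 1 := by
  have h := Matrix.mem_unitaryGroup_iff.mp hM
  have := congrFun (congrFun h i) i
  rw [Matrix.mul_apply] at this
  simpa [Matrix.conjTranspose_apply, sq] using this

lemma unitary_col_sq_sum (M : Matrix (Fin n) (Fin n) ℝ)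
    (hM : M ∈ Matrix.unitaryGroup (Fin n) ℝ) (j : Fin n) :
    ∑ i, (M i j) ^ 2 = 1 := by
  have h := Matrix.mem_unitaryGroup_iff'.mp hM
  have := congrFun (congrFun h j) j
  rw [Matrix.mul_apply] at this
  simpa [Matrix.conjTranspose_apply, sq, mul_comm] using this

/-- Diagonal entries of `star W * A * W` as convex combinations of eigenvalues of `A`. -/
lemma conj_diag_eq (A : Matrix (Fin n) (Fin n) ℝ) (hA : A.IsHermitian)
    (W : Matrix (Fin n) (Fin n) ℝ) (i : Fin n) :
    (star W * A * W) i i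
      = ∑ j, ((star W * (hA.eigenvectorUnitary : Matrix (Fin n) (Fin n) ℝ)) i j) ^ 2
          * hA.eigenvalues j := by
  set V : Matrix (Fin n) (Fin n) ℝ := (hA.eigenvectorUnitary : Matrix (Fin n) (Fin n) ℝ) with hV
  have hdiag : (RCLike.ofReal ∘ hA.eigenvalues : Fin n → ℝ) = hA.eigenvalues := by
    funext k; simp
  have hspec : A = V * Matrix.diagonal hA.eigenvalues * star V := by
    rw [hV, ← hdiag]; exact hA.spectral_theorem
  have hkey : star W * A * W = (star W * V) * Matrix.diagonal hA.eigenvalues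
      * star (star W * V) := by
    have h3 : star W * A * W = star W * (V * Matrix.diagonal hA.eigenvalues * star V) * W := by
      rw [← hspec]
    rw [h3, StarMul.star_mul, star_star]
    noncomm_ring
  rw [hkey]
  set M : Matrix (Fin n) (Fin n) ℝ := star W * V
  rw [Matrix.mul_apply]
  congr 1; funext j
  rw [Matrix.mul_diagonal, Matrix.star_apply, star_trivial]
  ring

/-- Peierls-type inequality: the diagonal of a unitary conjugate stays in any convex set
containing the spectrum, and a convex function summed over the diagonal is dominated by
its sum over the spectrum. -/
lemma peierls_s9 {s : Set ℝ} (hs : Convex ℝ s) {f : ℝ → ℝ} (hf : ConvexOn ℝ s f)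
    (A : Matrix (Fin n) (Fin n) ℝ) (hA : A.IsHermitian)
    (hspec : ∀ i, hA.eigenvalues i ∈ s)
    (W : Matrix (Fin n) (Fin n) ℝ) (hW : W ∈ Matrix.unitaryGroup (Fin n) ℝ) :
    (∀ i, (star W * A * W) i i ∈ s) ∧
    ∑ i, f ((star W * A * W) i i) ≤ ∑ i, f (hA.eigenvalues i) := by
  set V : Matrix (Fin n) (Fin n) ℝ := (hA.eigenvectorUnitary : Matrix (Fin n) (Fin n) ℝ) with hV
  have hVmem : V ∈ Matrix.unitaryGroup (Fin n) ℝ := hA.eigenvectorUnitary.2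
  have hMmem : star W * V ∈ Matrix.unitaryGroup (Fin n) ℝ :=
    mul_mem (Unitary.star_mem hW) hVmem
  set M : Matrix (Fin n) (Fin n) ℝ := star W * V with hM
  have hdg : ∀ i, (star W * A * W) i i = ∑ j, (M i j) ^ 2 * hA.eigenvalues j :=
    fun i => conj_diag_eq A hA W i
  have hw0 : ∀ i j, (0:ℝ) ≤ (M i j) ^ 2 := fun i j => sq_nonneg _
  have hrow : ∀ i, ∑ j, (M i j) ^ 2 = 1 := unitary_row_sq_sum M hMmem
  have hcol : ∀ j, ∑ i, (M i j) ^ 2 = 1 := unitary_col_sq_sum M hMmem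
  constructor
  · intro i
    rw [hdg i]
    have := hs.sum_mem (t := Finset.univ) (fun j _ => hw0 i j) (hrow i) (fun j _ => hspec j)
    simpa [smul_eq_mul] using this
  · calc ∑ i, f ((star W * A * W) i i)
        ≤ ∑ i, ∑ j, (M i j) ^ 2 * f (hA.eigenvalues j) := by
          apply Finset.sum_le_sum
          intro i _
          rw [hdg i]
          have := hf.map_sum_le (t := Finset.univ) (fun j _ => hw0 i j) (hrow i)
            (fun j _ => hspec j)
          simpa [smul_eq_mul] using this
    _ = ∑ j, (∑ i, (M i j) ^ 2) * f (hA.eigenvalues j) := by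
          rw [Finset.sum_comm]
          simp [Finset.sum_mul]
    _ = ∑ j, f (hA.eigenvalues j) := by simp only [hcol, one_mul]

lemma trace_mpow (X : Matrix (Fin n) (Fin n) ℝ) (hX : X.IsHermitian) (r : ℝ) :
    (mpow X r).trace = ∑ i, hX.eigenvalues i ^ r := by
  rw [mpow, dif_pos hX, Matrix.trace_mul_cycle, Unitary.coe_star_mul_self, Matrix.one_mul,
    Matrix.trace_diagonal]

lemma trace_sq (X : Matrix (Fin n) (Fin n) ℝ) (hX : X.IsHermitian) :
    (Xᵀ * X).trace = ∑ i, hX.eigenvalues i ^ 2 := by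
  set V : Matrix (Fin n) (Fin n) ℝ := (hX.eigenvectorUnitary : Matrix (Fin n) (Fin n) ℝ) with hV
  have hsV : star V * V = 1 := Unitary.coe_star_mul_self _
  have h2 : ∀ y : Matrix (Fin n) (Fin n) ℝ, star V * (V * y) = y := fun y => by
    rw [← Matrix.mul_assoc, hsV, Matrix.one_mul]
  have hXt : Xᵀ = X := by
    rw [← Matrix.conjTranspose_eq_transpose_of_trivial, hX.eq]
  have hdiag : (RCLike.ofReal ∘ hX.eigenvalues : Fin n → ℝ) = hX.eigenvalues := by
    funext k; simp
  have hspec : X = V * Matrix.diagonal hX.eigenvalues * star V := by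
    rw [hV, ← hdiag]; exact hX.spectral_theorem
  set D : Matrix (Fin n) (Fin n) ℝ := Matrix.diagonal hX.eigenvalues with hD
  have key : X * X = V * (D * D) * star V := by
    conv_lhs => rw [hspec]
    simp only [Matrix.mul_assoc]
    rw [h2]
  rw [hXt, key, Matrix.trace_mul_cycle, ← Matrix.mul_assoc, hsV, Matrix.one_mul, hD,
    Matrix.diagonal_mul_diagonal, Matrix.trace_diagonal]
  simp [sq]

lemma eig_mem {α : ℝ} [Nonempty (Fin n)] {X : Matrix (Fin n) (Fin n) ℝ}
    (hX : X.PosDef) (hmax : eigMax X ≤ α) (i : Fin n) :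
    hX.1.eigenvalues i ∈ Set.Ioc 0 α := by
  constructor
  · exact hX.eigenvalues_pos i
  · have hb : eigMax X = ⨆ j, hX.1.eigenvalues j := by
      unfold eigMax; rw [dif_pos hX.1]
    rw [hb] at hmax
    exact le_trans (le_ciSup (Set.Finite.bddAbove (Set.finite_range _)) i) hmax

lemma posdef_comb {X Y : Matrix (Fin n) (Fin n) ℝ} (hX : X.PosDef) (hY : Y.PosDef)
    {a b : ℝ} (ha : 0 < a) (hb : 0 < b) : (a • X + b • Y).PosDef := by
  refine Matrix.PosDef.of_dotProduct_mulVec_pos ?_ ?_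
  · have hXt : Xᵀ = X := by rw [← Matrix.conjTranspose_eq_transpose_of_trivial, hX.1.eq]
    have hYt : Yᵀ = Y := by rw [← Matrix.conjTranspose_eq_transpose_of_trivial, hY.1.eq]
    simp [Matrix.IsHermitian, Matrix.conjTranspose_add, Matrix.conjTranspose_smul, hXt, hYt]
  · intro x hx
    have h1 := hX.dotProduct_mulVec_pos hx
    have h2 := hY.dotProduct_mulVec_pos hx
    have h3 : star x ⬝ᵥ (a • X + b • Y) *ᵥ x
        = a * (star x ⬝ᵥ X *ᵥ x) + b * (star x ⬝ᵥ Y *ᵥ x) := by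
      simp [Matrix.add_mulVec, Matrix.smul_mulVec, dotProduct_add, dotProduct_smul,
        smul_eq_mul]
    rw [h3]
    exact add_pos (mul_pos ha h1) (mul_pos hb h2)

/-- Master step: the set is closed under convex combinations and the Jensen inequality holds. -/
lemma master [Nonempty (Fin n)] (p α : ℝ) (hp : 0 < p) (hα : 0 < α)
    {X Y : Matrix (Fin n) (Fin n) ℝ}
    (hX : X.PosDef ∧ eigMax X ≤ α) (hY : Y.PosDef ∧ eigMax Y ≤ α)
    {a b : ℝ} (ha : 0 < a) (hb : 0 < b) (hab : a + b = 1) :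
    ((a • X + b • Y).PosDef ∧ eigMax (a • X + b • Y) ≤ α) ∧
    (mpow (a • X + b • Y) (-p)).trace
        - p * (p + 1) / α ^ (p + 2) / 2 * ((a • X + b • Y)ᵀ * (a • X + b • Y)).trace
      ≤ a * ((mpow X (-p)).trace - p * (p + 1) / α ^ (p + 2) / 2 * (Xᵀ * X).trace)
        + b * ((mpow Y (-p)).trace - p * (p + 1) / α ^ (p + 2) / 2 * (Yᵀ * Y).trace) := by
  set c : ℝ := p * (p + 1) / α ^ (p + 2) / 2 with hc
  set f : ℝ → ℝ := fun t => t ^ (-p) - c * t ^ 2 with hf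
  have hfconv : ConvexOn ℝ (Set.Ioc (0:ℝ) α) f := auxScalarConvex p α hp hα
  set C : Matrix (Fin n) (Fin n) ℝ := a • X + b • Y with hC
  have hCpd : C.PosDef := posdef_comb hX.1 hY.1 ha hb
  set W : Matrix (Fin n) (Fin n) ℝ :=
    (hCpd.1.eigenvectorUnitary : Matrix (Fin n) (Fin n) ℝ) with hW
  have hWmem : W ∈ Matrix.unitaryGroup (Fin n) ℝ := hCpd.1.eigenvectorUnitary.2
  -- diagonalization of C by W
  have hdiagC : star W * C * W = Matrix.diagonal hCpd.1.eigenvalues := by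
    have h := hCpd.1.conjStarAlgAut_star_eigenvectorUnitary
    have hid : (RCLike.ofReal ∘ hCpd.1.eigenvalues : Fin n → ℝ) = hCpd.1.eigenvalues := by
      funext k; simp
    rw [← hid]; exact h
  have hlamC : ∀ i, hCpd.1.eigenvalues i = (star W * C * W) i i := by
    intro i; rw [hdiagC, Matrix.diagonal_apply_eq]
  -- splitting of the conjugated diagonal
  have hsplit : ∀ i, (star W * C * W) i i
      = a * (star W * X * W) i i + b * (star W * Y * W) i i := by
    intro i
    have : star W * C * W = a • (star W * X * W) + b • (star W * Y * W) := by
      rw [hC]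
      rw [Matrix.mul_add, Matrix.add_mul]
      congr 1 <;> simp [Matrix.mul_smul, Matrix.smul_mul]
    rw [this]
    simp [smul_eq_mul]
  -- Peierls for X and Y
  obtain ⟨hqXmem, hqXsum⟩ := peierls_s9 (convex_Ioc 0 α) hfconv X hX.1.1
    (eig_mem hX.1 hX.2) W hWmem
  obtain ⟨hqYmem, hqYsum⟩ := peierls_s9 (convex_Ioc 0 α) hfconv Y hY.1.1
    (eig_mem hY.1 hY.2) W hWmem
  -- eigenvalues of C lie in (0, α]
  have hCmem : ∀ i, hCpd.1.eigenvalues i ∈ Set.Ioc (0:ℝ) α := by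
    intro i
    rw [hlamC i, hsplit i]
    have := (convex_Ioc (0:ℝ) α) (hqXmem i) (hqYmem i) ha.le hb.le hab
    simpa [smul_eq_mul] using this
  have hCmax : eigMax C ≤ α := by
    have hb' : eigMax C = ⨆ j, hCpd.1.eigenvalues j := by
      unfold eigMax; rw [dif_pos hCpd.1]
    rw [hb']
    exact ciSup_le fun i => (hCmem i).2
  refine ⟨⟨hCpd, hCmax⟩, ?_⟩
  -- rewrite all three values as eigenvalue sums of f
  have gform : ∀ (Z : Matrix (Fin n) (Fin n) ℝ) (hZ : Z.IsHermitian),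
      (mpow Z (-p)).trace - c * (Zᵀ * Z).trace = ∑ i, f (hZ.eigenvalues i) := by
    intro Z hZ
    rw [trace_mpow Z hZ, trace_sq Z hZ, hf]
    simp [Finset.mul_sum, Finset.sum_sub_distrib]
  rw [gform C hCpd.1, gform X hX.1.1, gform Y hY.1.1]
  calc ∑ i, f (hCpd.1.eigenvalues i)
      ≤ ∑ i, (a * f ((star W * X * W) i i) + b * f ((star W * Y * W) i i)) := by
        apply Finset.sum_le_sum
        intro i _
        rw [hlamC i, hsplit i]
        have := hfconv.2 (hqXmem i) (hqYmem i) ha.le hb.le hab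
        simpa [smul_eq_mul] using this
    _ = a * ∑ i, f ((star W * X * W) i i) + b * ∑ i, f ((star W * Y * W) i i) := by
        rw [Finset.sum_add_distrib, Finset.mul_sum, Finset.mul_sum]
    _ ≤ a * ∑ i, f (hX.1.1.eigenvalues i) + b * ∑ i, f (hY.1.1.eigenvalues i) := by
        exact add_le_add (mul_le_mul_of_nonneg_left hqXsum ha.le)
          (mul_le_mul_of_nonneg_left hqYsum hb.le)

end Aux

/-- `g(X) = Tr(X^{−p})` is `μ`-strongly convex w.r.t. the Frobenius norm
on `𝒟 = {X ≻ 0 : λ_max(X) ≤ α}` with `μ = p(p+1)/α^{p+2}`: the function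
`X ↦ Tr(X^{−p}) − (μ/2)·‖X‖_F²` (where `‖X‖_F² = Tr(Xᵀ X)`) is convex on `𝒟`. -/
theorem trace_power_strongly_convex (n : ℕ) (p α : ℝ) (hp : 0 < p) (hα : 0 < α) :
    ConvexOn ℝ {X : Matrix (Fin n) (Fin n) ℝ | X.PosDef ∧ eigMax X ≤ α}
      (fun X => (mpow X (-p)).trace - p * (p + 1) / α ^ (p + 2) / 2 * (Xᵀ * X).trace) := by
  rcases Nat.eq_zero_or_pos n with hn | hn
  · subst hn
    have hset : ∀ X : Matrix (Fin 0) (Fin 0) ℝ, X.PosDef ∧ eigMax X ≤ α := by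
      intro X
      refine ⟨⟨Subsingleton.elim _ _, fun x hx => absurd (Subsingleton.elim x 0) hx⟩, ?_⟩
      unfold eigMax
      split
      · rw [Real.iSup_of_isEmpty _]; exact hα.le
      · exact hα.le
    have hsetU : {X : Matrix (Fin 0) (Fin 0) ℝ | X.PosDef ∧ eigMax X ≤ α} = Set.univ := by
      ext X; simp [hset X]
    have hfun : (fun X : Matrix (Fin 0) (Fin 0) ℝ =>
        (mpow X (-p)).trace - p * (p + 1) / α ^ (p + 2) / 2 * (Xᵀ * X).trace)
        = fun _ => (0:ℝ) := by
      funext X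
      simp [Matrix.trace]
    rw [hsetU, hfun]
    exact convexOn_const 0 convex_univ
  · haveI : Nonempty (Fin n) := ⟨⟨0, hn⟩⟩
    constructor
    · intro X hXmem Y hYmem a b ha hb hab
      rcases eq_or_lt_of_le ha with rfl | ha'
      · have hb1 : b = 1 := by linarith
        simpa [hb1] using hYmem
      rcases eq_or_lt_of_le hb with rfl | hb'
      · have ha1 : a = 1 := by linarith
        simpa [ha1] using hXmem
      exact (master p α hp hα hXmem hYmem ha' hb' hab).1
    · intro X hXmem Y hYmem a b ha hb hab
      rcases eq_or_lt_of_le ha with rfl | ha'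
      · have hb1 : b = 1 := by linarith
        simp [hb1]
      rcases eq_or_lt_of_le hb with rfl | hb'
      · have ha1 : a = 1 := by linarith
        simp [ha1]
      have := (master p α hp hα hXmem hYmem ha' hb' hab).2
      simpa [smul_eq_mul] using this
end
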